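/- arXiv:1212.5402 — 4 statements merged into one kernel-verified Lean document; each statement's English description precedes it below -/
import Mathlib

section
/- Let β > 0 and 1 < r < ∞. There exists a constant c = c(β, r) > 0 such that for every sequence {a_k}_{k≥1} of nonnegative real numbers and every increasing sequence {ν_n}_{n≥0} of positive reals with ν_0 = 1, one has Σ_{n=0}^∞ 2^{-nβ} (Σ_{1 ≤ k ≤ ν_n} a_k)^{1/r} ≤ c · Σ_{n=1}^∞ 2^{-nβ} (Σ_{ν_{n-1} ≤ k ≤ ν_n} a_k)^{1/r}. -/
open scoped ENNReal
open Filter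

private lemma sum_rpow_le_rpow_sum {s : Finset ℕ} {f : ℕ → ℝ≥0∞} {p : ℝ}
    (hp0 : 0 < p) (hp1 : p ≤ 1) : (∑ i ∈ s, f i) ^ p ≤ ∑ i ∈ s, f i ^ p := by
  classical
  induction s using Finset.induction with
  | empty => simp [ENNReal.zero_rpow_of_pos hp0]
  | insert _ _ h ih =>
      rw [Finset.sum_insert h, Finset.sum_insert h]
      exact (ENNReal.rpow_add_le_add_rpow _ _ hp0.le hp1).trans (by gcongr)

/-- Lemma 2.2 (Hardy-type inequality): for `β > 0`, `1 < r < ∞` there is `c > 0` such that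
for all nonnegative `{a_k}_{k≥1}` and increasing positive `{ν_n}_{n≥0}` with `ν_0 = 1`,
`∑_{n≥0} 2^{-nβ} (∑_{1≤k≤ν_n} a_k)^{1/r} ≤ c ∑_{n≥1} 2^{-nβ} (∑_{ν_{n-1}≤k≤ν_n} a_k)^{1/r}`. -/
theorem stmt2 (β r : ℝ) (hβ : 0 < β) (hr : 1 < r) :
    ∃ c : ℝ, 0 < c ∧
      ∀ (a : ℕ → ℝ), (∀ k, 0 ≤ a k) →
      ∀ (ν : ℕ → ℝ), StrictMono ν → (∀ n, 0 < ν n) → ν 0 = 1 →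
        (∑' n : ℕ, ENNReal.ofReal
            ((2 : ℝ) ^ (-(n : ℝ) * β) * (∑ k ∈ Finset.Icc 1 ⌊ν n⌋₊, a k) ^ (1 / r))) ≤
          ENNReal.ofReal c *
            ∑' n : ℕ, ENNReal.ofReal
              ((2 : ℝ) ^ (-((n : ℝ) + 1) * β) *
                (∑ k ∈ Finset.Icc ⌈ν n⌉₊ ⌊ν (n + 1)⌋₊, a k) ^ (1 / r)) := by
  have h2 : (0:ℝ) < 2 := by norm_num
  have hlt : (2:ℝ) ^ (-β) < 1 :=
    Real.rpow_lt_one_of_one_lt_of_neg (by norm_num) (by linarith)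
  have hpos : (0:ℝ) < 1 - (2:ℝ) ^ (-β) := by linarith
  have h2b : (0:ℝ) < (2:ℝ) ^ β := Real.rpow_pos_of_pos h2 β
  have h2nb : ∀ x : ℝ, (0:ℝ) < (2:ℝ) ^ x := fun x => Real.rpow_pos_of_pos h2 x
  refine ⟨(2:ℝ) ^ β + (1 - (2:ℝ) ^ (-β))⁻¹, by positivity, ?_⟩
  intro a ha ν hmono hνpos hν0
  have hp0 : 0 < 1 / r := by positivity
  have hp1 : 1 / r ≤ 1 := by
    rw [div_le_one (by linarith)]; linarith
  set p := 1 / r with hp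
  -- real-level partial sums
  set S : ℕ → ℝ := fun n => ∑ k ∈ Finset.Icc 1 ⌊ν n⌋₊, a k with hS
  set B : ℕ → ℝ := fun n => ∑ k ∈ Finset.Icc ⌈ν n⌉₊ ⌊ν (n + 1)⌋₊, a k with hB
  have hSnn : ∀ n, 0 ≤ S n := fun n => Finset.sum_nonneg fun k _ => ha k
  have hBnn : ∀ n, 0 ≤ B n := fun n => Finset.sum_nonneg fun k _ => ha k
  have hceil0 : ⌈ν 0⌉₊ = 1 := by rw [hν0]; exact Nat.ceil_one
  have hfloor0 : ⌊ν 0⌋₊ = 1 := by rw [hν0]; exact Nat.floor_one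
  -- S (n+1) ≤ ∑_{m ≤ n} B m
  have key : ∀ n, S (n + 1) ≤ ∑ m ∈ Finset.range (n + 1), B m := by
    intro n
    induction n with
    | zero =>
        simp [hS, hB, hceil0]
    | succ n ih =>
        have hsub : Finset.Icc 1 ⌊ν (n + 1 + 1)⌋₊ ⊆
            Finset.Icc 1 ⌊ν (n + 1)⌋₊ ∪ Finset.Icc ⌈ν (n + 1)⌉₊ ⌊ν (n + 1 + 1)⌋₊ := by
          intro k hk
          rw [Finset.mem_Icc] at hk
          rcases le_or_gt k ⌊ν (n + 1)⌋₊ with h | h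
          · exact Finset.mem_union_left _ (Finset.mem_Icc.mpr ⟨hk.1, h⟩)
          · refine Finset.mem_union_right _ (Finset.mem_Icc.mpr ⟨?_, hk.2⟩)
            calc ⌈ν (n + 1)⌉₊ ≤ ⌊ν (n + 1)⌋₊ + 1 := Nat.ceil_le_floor_add_one _
              _ ≤ k := h
        have h1 : S (n + 1 + 1) ≤ ∑ k ∈ Finset.Icc 1 ⌊ν (n + 1)⌋₊ ∪
            Finset.Icc ⌈ν (n + 1)⌉₊ ⌊ν (n + 1 + 1)⌋₊, a k :=
          Finset.sum_le_sum_of_subset_of_nonneg hsub (fun k _ _ => ha k)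
        have h2' : ∑ k ∈ Finset.Icc 1 ⌊ν (n + 1)⌋₊ ∪
            Finset.Icc ⌈ν (n + 1)⌉₊ ⌊ν (n + 1 + 1)⌋₊, a k ≤ S (n + 1) + B (n + 1) := by
          have huni := Finset.sum_union_inter (s₁ := Finset.Icc 1 ⌊ν (n + 1)⌋₊)
            (s₂ := Finset.Icc ⌈ν (n + 1)⌉₊ ⌊ν (n + 1 + 1)⌋₊) (f := a)
          have hint : 0 ≤ ∑ k ∈ Finset.Icc 1 ⌊ν (n + 1)⌋₊ ∩
              Finset.Icc ⌈ν (n + 1)⌉₊ ⌊ν (n + 1 + 1)⌋₊, a k :=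
            Finset.sum_nonneg fun k _ => ha k
          rw [hS, hB]
          dsimp only
          linarith
        rw [Finset.sum_range_succ]
        calc S (n + 1 + 1) ≤ S (n + 1) + B (n + 1) := h1.trans h2'
          _ ≤ (∑ m ∈ Finset.range (n + 1), B m) + B (n + 1) := by linarith
  have key0 : S 0 ≤ B 0 := by
    rw [hS, hB]
    dsimp only
    rw [hceil0, hfloor0]
    refine Finset.sum_le_sum_of_subset_of_nonneg ?_ (fun k _ _ => ha k)
    apply Finset.Icc_subset_Icc_right
    rw [Nat.one_le_iff_ne_zero, ← Nat.pos_iff_ne_zero, Nat.floor_pos]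
    have h01 := hmono (show 0 < 1 by norm_num)
    rw [hν0] at h01
    exact h01.le
  -- ENNReal setup
  set q : ℝ≥0∞ := ENNReal.ofReal ((2:ℝ) ^ (-β)) with hq
  set G : ℕ → ℝ≥0∞ := fun n => ENNReal.ofReal
      ((2 : ℝ) ^ (-((n : ℝ) + 1) * β) * B n ^ p) with hG
  set F : ℕ → ℝ≥0∞ := fun n => ENNReal.ofReal ((2 : ℝ) ^ (-(n : ℝ) * β) * S n ^ p) with hF
  set D : ℝ≥0∞ := ENNReal.ofReal ((1 - (2:ℝ) ^ (-β))⁻¹) with hD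
  have hDq : D = (1 - q)⁻¹ := by
    rw [hD, hq, ← ENNReal.ofReal_one, ← ENNReal.ofReal_sub _ (h2nb (-β)).le,
      ENNReal.ofReal_inv_of_pos hpos]
  -- F 0 ≤ ofReal (2^β) * G 0
  have hF0 : F 0 ≤ ENNReal.ofReal ((2:ℝ) ^ β) * G 0 := by
    rw [hF, hG, ← ENNReal.ofReal_mul h2b.le]
    apply ENNReal.ofReal_le_ofReal
    have e1 : (2:ℝ) ^ (-((0:ℕ) : ℝ) * β) = 1 := by norm_num
    have e2 : (2:ℝ) ^ β * (2:ℝ) ^ (-(((0:ℕ) : ℝ) + 1) * β) = 1 := by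
      rw [← Real.rpow_add h2]
      norm_num
    calc (2:ℝ) ^ (-((0:ℕ) : ℝ) * β) * S 0 ^ p = S 0 ^ p := by rw [e1, one_mul]
      _ ≤ B 0 ^ p := Real.rpow_le_rpow (hSnn 0) key0 hp0.le
      _ = (2:ℝ) ^ β * ((2:ℝ) ^ (-(((0:ℕ) : ℝ) + 1) * β) * B 0 ^ p) := by
          rw [← mul_assoc, e2, one_mul]
  -- the kernel
  set H : ℕ → ℕ → ℝ≥0∞ := fun n m =>
    if m ≤ n then ENNReal.ofReal ((2:ℝ) ^ (-((n : ℝ) + 1) * β)) * ENNReal.ofReal (B m ^ p)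
    else 0 with hH
  -- termwise bound for F (n+1)
  have hFn : ∀ n : ℕ, F (n + 1) ≤ ∑' m, H n m := by
    intro n
    have hsum : ∑' m, H n m = ∑ m ∈ Finset.range (n + 1), H n m := by
      apply tsum_eq_sum
      intro m hm
      rw [Finset.mem_range, not_lt] at hm
      rw [hH]
      simp only
      rw [if_neg (by omega)]
    rw [hsum]
    have hterm : ∀ m ∈ Finset.range (n + 1), H n m =
        ENNReal.ofReal ((2:ℝ) ^ (-((n : ℝ) + 1) * β)) * ENNReal.ofReal (B m ^ p) := by
      intro m hm
      rw [Finset.mem_range] at hm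
      rw [hH]
      simp only
      rw [if_pos (by omega)]
    rw [Finset.sum_congr rfl hterm, ← Finset.mul_sum]
    have hcast : (-(((n:ℕ)+1 : ℕ) : ℝ) * β) = -((n : ℝ) + 1) * β := by push_cast; ring
    rw [hF]
    simp only
    rw [hcast, ENNReal.ofReal_mul (h2nb _).le]
    gcongr
    rw [← ENNReal.ofReal_rpow_of_nonneg (hSnn _) hp0.le]
    calc (ENNReal.ofReal (S (n+1))) ^ p
        ≤ (ENNReal.ofReal (∑ m ∈ Finset.range (n + 1), B m)) ^ p := by
          gcongr
          exact key n
      _ = (∑ m ∈ Finset.range (n + 1), ENNReal.ofReal (B m)) ^ p := by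
          rw [ENNReal.ofReal_sum_of_nonneg (fun m _ => hBnn m)]
      _ ≤ ∑ m ∈ Finset.range (n + 1), (ENNReal.ofReal (B m)) ^ p :=
          sum_rpow_le_rpow_sum hp0 hp1
      _ = ∑ m ∈ Finset.range (n + 1), ENNReal.ofReal (B m ^ p) := by
          refine Finset.sum_congr rfl fun m _ => ?_
          rw [ENNReal.ofReal_rpow_of_nonneg (hBnn m) hp0.le]
  -- inner geometric sum
  have hinner : ∀ m : ℕ, ∑' n, H n m = D * G m := by
    intro m
    have hshift := (Summable.sum_add_tsum_nat_add' (f := fun n => H n m) (k := m)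
      ENNReal.summable).symm
    have hzero : ∑ i ∈ Finset.range m, H i m = 0 := by
      apply Finset.sum_eq_zero
      intro i hi
      rw [Finset.mem_range] at hi
      rw [hH]
      simp only
      rw [if_neg (by omega)]
    have hterm : ∀ i : ℕ, H (i + m) m = q ^ i * G m := by
      intro i
      rw [hH, hG, hq]
      simp only
      rw [if_pos (Nat.le_add_left m i)]
      have e : (2:ℝ) ^ (-((((i + m) : ℕ) : ℝ) + 1) * β) =
          ((2:ℝ) ^ (-β)) ^ i * (2:ℝ) ^ (-((m : ℝ) + 1) * β) := by
        rw [← Real.rpow_natCast ((2:ℝ) ^ (-β)) i, ← Real.rpow_mul h2.le,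
          ← Real.rpow_add h2]
        push_cast
        ring_nf
      rw [e, ENNReal.ofReal_mul (by positivity), ENNReal.ofReal_pow (h2nb (-β)).le,
        ENNReal.ofReal_mul (h2nb _).le]
      ring
    rw [hshift, hzero, zero_add]
    simp only [hterm]
    rw [ENNReal.tsum_mul_right, ENNReal.tsum_geometric, ← hDq]
  -- assemble
  have main : ∑' n, F n ≤ ENNReal.ofReal ((2:ℝ) ^ β + (1 - (2:ℝ) ^ (-β))⁻¹) * ∑' n, G n := by
    calc ∑' n, F n = F 0 + ∑' n, F (n + 1) := tsum_eq_zero_add' ENNReal.summable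
      _ ≤ ENNReal.ofReal ((2:ℝ) ^ β) * G 0 + ∑' n, ∑' m, H n m := by
          exact add_le_add hF0 (ENNReal.tsum_le_tsum hFn)
      _ = ENNReal.ofReal ((2:ℝ) ^ β) * G 0 + ∑' m, ∑' n, H n m := by
          rw [ENNReal.tsum_comm]
      _ = ENNReal.ofReal ((2:ℝ) ^ β) * G 0 + D * ∑' m, G m := by
          congr 1
          simp only [hinner]
          rw [ENNReal.tsum_mul_left]
      _ ≤ ENNReal.ofReal ((2:ℝ) ^ β) * ∑' m, G m + D * ∑' m, G m := by
          gcongr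
          exact ENNReal.le_tsum 0
      _ = (ENNReal.ofReal ((2:ℝ) ^ β) + D) * ∑' m, G m := by rw [add_mul]
      _ = ENNReal.ofReal ((2:ℝ) ^ β + (1 - (2:ℝ) ^ (-β))⁻¹) * ∑' m, G m := by
          rw [ENNReal.ofReal_add h2b.le (by positivity), hD]
  exact main
end

section
/- Let 1 ≤ p < ∞. Let I = [a,b] ⊂ [0,1], N ∈ ℕ, and H_0, ..., H_{N-1} ≥ 0. Let F be the continuous 1-periodic 'triangle function' that vanishes outside I, vanishes at the points ξ_j = a + j(b-a)/N for 0 ≤ j ≤ N, takes the value H_j at the midpoints ξ_j* = a + (j + 1/2)(b-a)/N, and is linear in between. Then the total p-variation of F over a period equals 2^{1/p} (Σ_{j=0}^{N-1} H_j^p)^{1/p}. -/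
open scoped ENNReal
open Filter MeasureTheory

noncomputable section

/-- A sequence of nonoverlapping closed subintervals `[a n, b n]` of a period `[0,1]`:
the intervals have disjoint interiors. -/
def Nonoverlapping (a b : ℕ → ℝ) : Prop :=
  (∀ n, 0 ≤ a n ∧ a n ≤ b n ∧ b n ≤ 1) ∧
  ∀ m n, m ≠ n → Set.Ioo (a m) (b m) ∩ Set.Ioo (a n) (b n) = ∅

/-- `∑_n |f(I_n)|^p` for the family of intervals `I_n = [a n, b n]`. -/
def vpSum (p : ℝ) (f : ℝ → ℝ) (a b : ℕ → ℝ) : ℝ≥0∞ :=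
  ∑' n, ENNReal.ofReal (|f (b n) - f (a n)| ^ p)

/-- The `p`-variation of `f` over a period. -/
def vp (p : ℝ) (f : ℝ → ℝ) : ℝ≥0∞ :=
  ⨆ (a : ℕ → ℝ) (b : ℕ → ℝ) (_ : Nonoverlapping a b), (vpSum p f a b) ^ (1 / p)

/-- The modulus of `p`-continuity `ω_{1-1/p}(f; δ)`. -/
def pMod (p : ℝ) (f : ℝ → ℝ) (δ : ℝ) : ℝ≥0∞ :=
  ⨆ (a : ℕ → ℝ) (b : ℕ → ℝ) (_ : Nonoverlapping a b ∧ ∀ n, b n - a n ≤ δ),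
    (vpSum p f a b) ^ (1 / p)

/-- The `Λ`-variation of `f` over a period; the `n`-th interval (counting from `0`)
is paired with the weight `λ_{n+1}` (weights are indexed from `1`). -/
def vLam (lam : ℕ → ℝ) (f : ℝ → ℝ) : ℝ≥0∞ :=
  ⨆ (a : ℕ → ℝ) (b : ℕ → ℝ) (_ : Nonoverlapping a b),
    ∑' n, ENNReal.ofReal (|f (b n) - f (a n)| / lam (n + 1))

/-- `Λ = {λ_n}_{n ≥ 1} ∈ 𝒮`: positive, nondecreasing, `λ_n → ∞`, `∑ 1/λ_n = ∞`. -/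
def IsLambdaSeq (lam : ℕ → ℝ) : Prop :=
  (∀ n, 1 ≤ n → 0 < lam n) ∧ (∀ m n, 1 ≤ m → m ≤ n → lam m ≤ lam n) ∧
  Tendsto lam atTop atTop ∧ ¬ Summable (fun n => 1 / lam (n + 1))

/-- The hypotheses describing the triangle function `F = F(I, N, H)` of Definition 2.1:
`F` is continuous, 1-periodic, vanishes on `[0,1] \ [a,b]` and at the nodes
`ξ_j = a + j h` (`h = (b-a)/N`), equals `H j` at the midpoints `ξ_j* = a + (j+1/2) h`,
and is linear on each half-interval. -/
def IsTriangleFun (a b : ℝ) (N : ℕ) (H : ℕ → ℝ) (F : ℝ → ℝ) : Prop :=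
  Continuous F ∧ Function.Periodic F 1 ∧
  (∀ x ∈ Set.Icc (0:ℝ) 1, x ∉ Set.Icc a b → F x = 0) ∧
  (∀ j : ℕ, j ≤ N → F (a + j * ((b - a) / N)) = 0) ∧
  (∀ j : ℕ, j < N → F (a + (j + 1 / 2) * ((b - a) / N)) = H j) ∧
  (∀ j : ℕ, j < N → ∀ x ∈ Set.Icc (a + j * ((b - a) / N)) (a + (j + 1 / 2) * ((b - a) / N)),
    F x = H j * (x - (a + j * ((b - a) / N))) / (((b - a) / N) / 2)) ∧
  (∀ j : ℕ, j < N → ∀ x ∈ Set.Icc (a + (j + 1 / 2) * ((b - a) / N)) (a + (j + 1) * ((b - a) / N)),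
    F x = H j * ((a + (j + 1) * ((b - a) / N)) - x) / (((b - a) / N) / 2))

section TriAuxLemmas

lemma TriAux.two_rpow (x y p : ℝ) (hx : 0 ≤ x) (hy : 0 ≤ y) (hp : 1 ≤ p) :
    x ^ p + y ^ p ≤ (x + y) ^ p := by
  have h := NNReal.add_rpow_le_rpow_add x.toNNReal y.toNNReal hp
  have := (NNReal.coe_le_coe).2 h
  push_cast [NNReal.coe_rpow] at this
  rwa [Real.coe_toNNReal _ hx, Real.coe_toNNReal _ hy] at this

lemma TriAux.sum_pow_le_pow_sum {p : ℝ} (hp : 1 ≤ p) (s : Finset ℕ) (f : ℕ → ℝ)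
    (hf : ∀ n ∈ s, 0 ≤ f n) : ∑ n ∈ s, f n ^ p ≤ (∑ n ∈ s, f n) ^ p := by
  induction s using Finset.cons_induction with
  | empty => simp [Real.zero_rpow (by positivity : p ≠ 0)]
  | cons a s ha ih =>
    rw [Finset.sum_cons, Finset.sum_cons]
    have h1 : ∑ n ∈ s, f n ^ p ≤ (∑ n ∈ s, f n) ^ p :=
      ih (fun n hn => hf n (Finset.mem_cons_of_mem hn))
    calc f a ^ p + ∑ n ∈ s, f n ^ p ≤ f a ^ p + (∑ n ∈ s, f n) ^ p := by linarith
    _ ≤ (f a + ∑ n ∈ s, f n) ^ p :=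
        TriAux.two_rpow _ _ p (hf a (Finset.mem_cons_self a s))
          (Finset.sum_nonneg fun n hn => hf n (Finset.mem_cons_of_mem hn)) hp



lemma TriAux.lemA (g : ℝ → ℝ) (u : ℝ) (s : Finset ℕ) :
    ∀ (v : ℝ), u ≤ v → MonotoneOn g (Set.Icc u v) →
    ∀ (α β : ℕ → ℝ), (∀ n ∈ s, u ≤ α n ∧ α n < β n ∧ β n ≤ v) →
    (∀ m ∈ s, ∀ n ∈ s, m ≠ n → Set.Ioo (α m) (β m) ∩ Set.Ioo (α n) (β n) = ∅) →
    ∑ n ∈ s, (g (β n) - g (α n)) ≤ g v - g u := by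
  induction s using Finset.strongInduction with
  | _ s ih =>
    intro v huv hg α β hab hdisj
    rcases s.eq_empty_or_nonempty with rfl | hne
    · simp only [Finset.sum_empty, sub_nonneg]
      exact hg ⟨le_refl u, huv⟩ ⟨huv, le_refl v⟩ huv
    · obtain ⟨n0, hn0, hmax⟩ := s.exists_max_image β hne
      have h0 := hab n0 hn0
      -- all other intervals lie left of α n0
      have hleft : ∀ m ∈ s.erase n0, β m ≤ α n0 := by
        intro m hm
        have hms : m ∈ s := Finset.mem_of_mem_erase hm
        have hmne : m ≠ n0 := Finset.ne_of_mem_erase hm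
        by_contra hc
        push_neg at hc
        have hm' := hab m hms
        set t := (max (α m) (α n0) + β m)/2 with ht
        have h1 : max (α m) (α n0) < β m := by
          rw [max_lt_iff]; exact ⟨hm'.2.1, hc⟩
        have ht1 : t ∈ Set.Ioo (α m) (β m) :=
          ⟨by simp only [ht]; nlinarith [le_max_left (α m) (α n0)],
           by simp only [ht]; nlinarith⟩
        have ht2 : t ∈ Set.Ioo (α n0) (β n0) :=
          ⟨by simp only [ht]; nlinarith [le_max_right (α m) (α n0)],
           by simp only [ht]; nlinarith [hmax m hms]⟩
        have := hdisj m hms n0 hn0 hmne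
        have hmem := Set.mem_inter ht1 ht2
        rw [this] at hmem
        exact hmem
      have hsub : s.erase n0 ⊂ s := Finset.erase_ssubset hn0
      have ihe := ih _ hsub (α n0) h0.1
        (hg.mono (Set.Icc_subset_Icc (le_refl u) (le_trans h0.2.1.le h0.2.2))) α β
        (fun n hn => ⟨(hab n (Finset.mem_of_mem_erase hn)).1,
          (hab n (Finset.mem_of_mem_erase hn)).2.1, hleft n hn⟩)
        (fun m hm n hn hmn => hdisj m (Finset.mem_of_mem_erase hm) n (Finset.mem_of_mem_erase hn) hmn)
      rw [← Finset.add_sum_erase s _ hn0]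
      have hgb : g (β n0) ≤ g v := by
        rcases eq_or_lt_of_le h0.2.2 with rfl | hlt
        · exact le_refl _
        · exact hg ⟨le_trans h0.1 h0.2.1.le, h0.2.2⟩ ⟨huv, le_refl v⟩ h0.2.2
      linarith

lemma TriAux.lemC' {p : ℝ} (hp : 1 ≤ p) (ξ0 μ ξ1 : ℝ) (hξμ : ξ0 ≤ μ) (hμξ : μ ≤ ξ1)
    (F : ℝ → ℝ) (Hj : ℝ)
    (Fmono : MonotoneOn F (Set.Icc ξ0 μ)) (Fanti : AntitoneOn F (Set.Icc μ ξ1))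
    (Fξ0 : F ξ0 = 0) (Fξ1 : F ξ1 = 0) (Fμ : F μ = Hj)
    (α0 β0 : ℝ) (hα0 : ξ0 ≤ α0) (hα0μ : α0 ≤ μ) (hμβ0 : μ ≤ β0) (hβ0 : β0 ≤ ξ1)
    (s : Finset ℕ) (α β : ℕ → ℝ)
    (hab : ∀ n ∈ s, ξ0 ≤ α n ∧ α n ≤ β n ∧ β n ≤ ξ1)
    (hnopk : ∀ n ∈ s, μ ∉ Set.Ioo (α n) (β n))
    (hd0 : ∀ n ∈ s, Set.Ioo (α n) (β n) ∩ Set.Ioo α0 β0 = ∅)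
    (hdisj : ∀ m ∈ s, ∀ n ∈ s, m ≠ n → Set.Ioo (α m) (β m) ∩ Set.Ioo (α n) (β n) = ∅) :
    (∑ n ∈ s, |F (β n) - F (α n)| ^ p) + |F β0 - F α0| ^ p ≤ 2 * Hj ^ p := by
  have hp0 : p ≠ 0 := by positivity
  have hFα0 : 0 ≤ F α0 := by rw [← Fξ0]; exact Fmono ⟨le_refl _, hξμ⟩ ⟨hα0, hα0μ⟩ hα0
  have hFα0' : F α0 ≤ Hj := by rw [← Fμ]; exact Fmono ⟨hα0, hα0μ⟩ ⟨hξμ, le_refl _⟩ hα0μ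
  have hFβ0 : 0 ≤ F β0 := by rw [← Fξ1]; exact Fanti ⟨hμβ0, hβ0⟩ ⟨hμξ, le_refl _⟩ hβ0
  have hFβ0' : F β0 ≤ Hj := by rw [← Fμ]; exact Fanti ⟨le_refl _, hμξ⟩ ⟨hμβ0, hβ0⟩ hμβ0
  -- split s
  set Q : ℕ → Prop := fun n => α n < β n with hQ
  classical
  have hsplit : ∑ n ∈ s, |F (β n) - F (α n)| ^ p
      = ∑ n ∈ s.filter Q, |F (β n) - F (α n)| ^ p := by
    rw [← Finset.sum_filter_add_sum_filter_not s Q]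
    have : ∑ n ∈ s.filter (fun n => ¬ Q n), |F (β n) - F (α n)| ^ p = 0 := by
      apply Finset.sum_eq_zero
      intro n hn
      rw [Finset.mem_filter] at hn
      have h1 := (hab n hn.1).2.1
      have : α n = β n := le_antisymm h1 (not_lt.1 hn.2)
      rw [this, sub_self, abs_zero, Real.zero_rpow hp0]
    rw [this, add_zero]
  set s1 := (s.filter Q).filter (fun n => β n ≤ μ) with hs1
  set s2 := (s.filter Q).filter (fun n => ¬ β n ≤ μ) with hs2
  have hsplit2 : ∑ n ∈ s.filter Q, |F (β n) - F (α n)| ^ p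
      = ∑ n ∈ s1, |F (β n) - F (α n)| ^ p + ∑ n ∈ s2, |F (β n) - F (α n)| ^ p :=
    (Finset.sum_filter_add_sum_filter_not _ _ _).symm
  -- s1 facts
  have hs1mem : ∀ n ∈ s1, n ∈ s ∧ α n < β n ∧ β n ≤ μ := by
    intro n hn
    simp only [hs1, Finset.mem_filter] at hn
    exact ⟨hn.1.1, hn.1.2, hn.2⟩
  have hs2mem : ∀ n ∈ s2, n ∈ s ∧ α n < β n ∧ μ ≤ α n := by
    intro n hn
    simp only [hs2, Finset.mem_filter] at hn
    refine ⟨hn.1.1, hn.1.2, ?_⟩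
    have := hnopk n hn.1.1
    simp only [Set.mem_Ioo, not_and, not_lt] at this
    by_contra hc
    push_neg at hc
    exact hn.2 (this hc)
  -- s1 intervals lie in [ξ0, α0]
  have hs1le : ∀ n ∈ s1, β n ≤ α0 := by
    intro n hn
    obtain ⟨hns, hαβ, hβμ⟩ := hs1mem n hn
    by_contra hc
    push_neg at hc
    set t := (max (α n) α0 + β n)/2 with ht
    have h1 : max (α n) α0 < β n := max_lt hαβ hc
    have ht1 : t ∈ Set.Ioo (α n) (β n) :=
      ⟨by nlinarith [le_max_left (α n) α0], by nlinarith⟩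
    have ht2 : t ∈ Set.Ioo α0 β0 :=
      ⟨by nlinarith [le_max_right (α n) α0], by nlinarith⟩
    have hmem := Set.mem_inter ht1 ht2
    rw [hd0 n hns] at hmem
    exact hmem
  have hs2le : ∀ n ∈ s2, β0 ≤ α n := by
    intro n hn
    obtain ⟨hns, hαβ, hμα⟩ := hs2mem n hn
    by_contra hc
    push_neg at hc
    set t := (α n + min (β n) β0)/2 with ht
    have h1 : α n < min (β n) β0 := lt_min hαβ hc
    have ht1 : t ∈ Set.Ioo (α n) (β n) :=
      ⟨by nlinarith, by nlinarith [min_le_left (β n) β0]⟩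
    have ht2 : t ∈ Set.Ioo α0 β0 :=
      ⟨by nlinarith [min_le_right (β n) β0], by nlinarith [min_le_right (β n) β0]⟩
    have hmem := Set.mem_inter ht1 ht2
    rw [hd0 n hns] at hmem
    exact hmem
  -- bound s1
  have hb1 : ∑ n ∈ s1, |F (β n) - F (α n)| ^ p ≤ (F α0) ^ p := by
    have habs : ∀ n ∈ s1, |F (β n) - F (α n)| = F (β n) - F (α n) := by
      intro n hn
      obtain ⟨hns, hαβ, hβμ⟩ := hs1mem n hn
      have h1 := (hab n hns).1
      rw [abs_of_nonneg]
      rw [sub_nonneg]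
      exact Fmono ⟨h1, le_trans hαβ.le hβμ⟩ ⟨le_trans h1 hαβ.le, hβμ⟩ hαβ.le
    calc ∑ n ∈ s1, |F (β n) - F (α n)| ^ p
        = ∑ n ∈ s1, (F (β n) - F (α n)) ^ p := by
          exact Finset.sum_congr rfl (fun n hn => by rw [habs n hn])
      _ ≤ (∑ n ∈ s1, (F (β n) - F (α n))) ^ p := by
          apply TriAux.sum_pow_le_pow_sum hp
          intro n hn
          rw [← habs n hn]; exact abs_nonneg _
      _ ≤ (F α0 - F ξ0) ^ p := by
          apply Real.rpow_le_rpow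
          · apply Finset.sum_nonneg
            intro n hn; rw [← habs n hn]; exact abs_nonneg _
          · exact TriAux.lemA F ξ0 s1 α0 hα0
              (Fmono.mono (Set.Icc_subset_Icc (le_refl _) hα0μ)) α β
              (fun n hn => ⟨(hab n (hs1mem n hn).1).1, (hs1mem n hn).2.1, hs1le n hn⟩)
              (fun m hm n hn hmn => hdisj m (hs1mem m hm).1 n (hs1mem n hn).1 hmn)
          · positivity
      _ = (F α0) ^ p := by rw [Fξ0, sub_zero]
  -- bound s2
  have hb2 : ∑ n ∈ s2, |F (β n) - F (α n)| ^ p ≤ (F β0) ^ p := by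
    have habs : ∀ n ∈ s2, |F (β n) - F (α n)| = (-F) (β n) - (-F) (α n) := by
      intro n hn
      obtain ⟨hns, hαβ, hμα⟩ := hs2mem n hn
      have h1 := (hab n hns).2.2
      rw [abs_sub_comm, abs_of_nonneg]
      · simp only [Pi.neg_apply]; ring
      rw [sub_nonneg]
      exact Fanti ⟨hμα, le_trans hαβ.le h1⟩ ⟨le_trans hμα hαβ.le, h1⟩ hαβ.le
    have hmono : MonotoneOn (-F) (Set.Icc β0 ξ1) := by
      intro x hx y hy hxy
      simp only [Pi.neg_apply, neg_le_neg_iff]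
      exact Fanti ⟨le_trans hμβ0 hx.1, hx.2⟩ ⟨le_trans hμβ0 hy.1, hy.2⟩ hxy
    calc ∑ n ∈ s2, |F (β n) - F (α n)| ^ p
        = ∑ n ∈ s2, ((-F) (β n) - (-F) (α n)) ^ p :=
          Finset.sum_congr rfl (fun n hn => by rw [habs n hn])
      _ ≤ (∑ n ∈ s2, ((-F) (β n) - (-F) (α n))) ^ p := by
          apply TriAux.sum_pow_le_pow_sum hp
          intro n hn
          rw [← habs n hn]; exact abs_nonneg _
      _ ≤ ((-F) ξ1 - (-F) β0) ^ p := by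
          apply Real.rpow_le_rpow
          · apply Finset.sum_nonneg
            intro n hn; rw [← habs n hn]; exact abs_nonneg _
          · exact TriAux.lemA (-F) β0 s2 ξ1 hβ0 hmono α β
              (fun n hn => ⟨hs2le n hn, (hs2mem n hn).2.1, (hab n (hs2mem n hn).1).2.2⟩)
              (fun m hm n hn hmn => hdisj m (hs2mem m hm).1 n (hs2mem n hn).1 hmn)
          · positivity
      _ = (F β0) ^ p := by simp [Fξ1]
  -- peak bound
  have hpk : (F α0) ^ p + (F β0) ^ p + |F β0 - F α0| ^ p ≤ 2 * Hj ^ p := by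
    rcases le_total (F α0) (F β0) with hle | hle
    · have h1 : (F α0) ^ p + (F β0 - F α0) ^ p ≤ (F β0) ^ p := by
        have := TriAux.two_rpow (F α0) (F β0 - F α0) p hFα0 (by linarith) hp
        simpa using this
      have h2 : (F β0) ^ p ≤ Hj ^ p := Real.rpow_le_rpow hFβ0 hFβ0' (by positivity)
      rw [abs_of_nonneg (by linarith)]
      linarith
    · have h1 : (F β0) ^ p + (F α0 - F β0) ^ p ≤ (F α0) ^ p := by
        have := TriAux.two_rpow (F β0) (F α0 - F β0) p hFβ0 (by linarith) hp
        simpa using this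
      have h2 : (F α0) ^ p ≤ Hj ^ p := Real.rpow_le_rpow hFα0 hFα0' (by positivity)
      rw [abs_of_nonpos (by linarith), neg_sub]
      linarith
  rw [hsplit, hsplit2]
  linarith

lemma TriAux.lemC {p : ℝ} (hp : 1 ≤ p) (ξ0 μ ξ1 : ℝ) (hξμ : ξ0 ≤ μ) (hμξ : μ ≤ ξ1)
    (F : ℝ → ℝ) (Hj : ℝ)
    (Fmono : MonotoneOn F (Set.Icc ξ0 μ)) (Fanti : AntitoneOn F (Set.Icc μ ξ1))
    (Fξ0 : F ξ0 = 0) (Fξ1 : F ξ1 = 0) (Fμ : F μ = Hj)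
    (s : Finset ℕ) (α β : ℕ → ℝ)
    (hab : ∀ n ∈ s, ξ0 ≤ α n ∧ α n ≤ β n ∧ β n ≤ ξ1)
    (hdisj : ∀ m ∈ s, ∀ n ∈ s, m ≠ n → Set.Ioo (α m) (β m) ∩ Set.Ioo (α n) (β n) = ∅) :
    ∑ n ∈ s, |F (β n) - F (α n)| ^ p ≤ 2 * Hj ^ p := by
  classical
  by_cases hpk : ∃ n ∈ s, μ ∈ Set.Ioo (α n) (β n)
  · obtain ⟨n0, hn0, hμ0⟩ := hpk
    have key := TriAux.lemC' hp ξ0 μ ξ1 hξμ hμξ F Hj Fmono Fanti Fξ0 Fξ1 Fμ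
      (α n0) (β n0) (hab n0 hn0).1 hμ0.1.le hμ0.2.le (hab n0 hn0).2.2
      (s.erase n0) α β
      (fun n hn => hab n (Finset.mem_of_mem_erase hn))
      (fun n hn hc => by
        have hd := hdisj n (Finset.mem_of_mem_erase hn) n0 hn0 (Finset.ne_of_mem_erase hn)
        have : μ ∈ Set.Ioo (α n) (β n) ∩ Set.Ioo (α n0) (β n0) := ⟨hc, hμ0⟩
        rw [hd] at this; exact this)
      (fun n hn => hdisj n (Finset.mem_of_mem_erase hn) n0 hn0 (Finset.ne_of_mem_erase hn))
      (fun m hm n hn hmn => hdisj m (Finset.mem_of_mem_erase hm) n (Finset.mem_of_mem_erase hn) hmn)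
    rw [← Finset.add_sum_erase s _ hn0]
    linarith
  · push_neg at hpk
    have key := TriAux.lemC' hp ξ0 μ ξ1 hξμ hμξ F Hj Fmono Fanti Fξ0 Fξ1 Fμ
      μ μ hξμ (le_refl μ) (le_refl μ) hμξ s α β hab hpk
      (fun n hn => by simp) hdisj
    have : |F μ - F μ| ^ p = 0 := by
      rw [sub_self, abs_zero, Real.zero_rpow (by positivity)]
    linarith

namespace TriAux

noncomputable def xi (a b : ℝ) (N : ℕ) (j : ℕ) : ℝ := a + j * ((b - a) / N)
noncomputable def mid (a b : ℝ) (N : ℕ) (j : ℕ) : ℝ := a + ((j : ℝ) + 1/2) * ((b - a) / N)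

variable {a b : ℝ} {N : ℕ} {H : ℕ → ℝ} {F : ℝ → ℝ}

lemma h_pos (hab : a < b) (hN : 0 < N) : 0 < (b - a) / N :=
  div_pos (by linarith) (by exact_mod_cast hN)

lemma xi_zero : xi a b N 0 = a := by simp [xi]

lemma xi_N (hN : 0 < N) : xi a b N N = b := by
  have : (N : ℝ) ≠ 0 := by exact_mod_cast hN.ne'
  have h2 : (N : ℝ) * ((b - a) / N) = b - a := by rw [mul_comm]; exact div_mul_cancel₀ _ this
  unfold xi; linarith

lemma xi_le_xi (hab : a < b) (hN : 0 < N) {j k : ℕ} (hjk : j ≤ k) :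
    xi a b N j ≤ xi a b N k := by
  have := h_pos hab hN
  have : (j : ℝ) ≤ k := by exact_mod_cast hjk
  unfold xi; nlinarith [h_pos hab hN]

lemma xi_lt_mid (hab : a < b) (hN : 0 < N) (j : ℕ) : xi a b N j < mid a b N j := by
  have := h_pos hab hN; unfold xi mid; nlinarith

lemma mid_lt_xi (hab : a < b) (hN : 0 < N) (j : ℕ) : mid a b N j < xi a b N (j + 1) := by
  have := h_pos hab hN; unfold xi mid; push_cast; nlinarith

lemma xi_succ (j : ℕ) : xi a b N (j+1) = a + ((j:ℝ) + 1) * ((b - a) / N) := by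
  unfold xi; push_cast; ring

lemma Fnode (hF : IsTriangleFun a b N H F) {j : ℕ} (hj : j ≤ N) : F (xi a b N j) = 0 :=
  hF.2.2.2.1 j hj

lemma Fmid (hF : IsTriangleFun a b N H F) {j : ℕ} (hj : j < N) : F (mid a b N j) = H j :=
  hF.2.2.2.2.1 j hj

lemma Fmono (hab : a < b) (hN : 0 < N) (hH : ∀ j, 0 ≤ H j)
    (hF : IsTriangleFun a b N H F) {j : ℕ} (hj : j < N) :
    MonotoneOn F (Set.Icc (xi a b N j) (mid a b N j)) := by
  intro x hx y hy hxy
  have hp := h_pos hab hN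
  rw [hF.2.2.2.2.2.1 j hj x hx, hF.2.2.2.2.2.1 j hj y hy]
  gcongr
  all_goals first
    | exact hH j
    | positivity
    | linarith

lemma Fanti (hab : a < b) (hN : 0 < N) (hH : ∀ j, 0 ≤ H j)
    (hF : IsTriangleFun a b N H F) {j : ℕ} (hj : j < N) :
    AntitoneOn F (Set.Icc (mid a b N j) (xi a b N (j + 1))) := by
  intro x hx y hy hxy
  have hp := h_pos hab hN
  rw [xi_succ] at hx hy
  rw [hF.2.2.2.2.2.2 j hj x hx, hF.2.2.2.2.2.2 j hj y hy]
  gcongr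
  all_goals first
    | exact hH j
    | positivity
    | linarith

lemma Fnonneg (hab : a < b) (hN : 0 < N) (hH : ∀ j, 0 ≤ H j)
    (hF : IsTriangleFun a b N H F) {j : ℕ} (hj : j < N) {x : ℝ}
    (hx : x ∈ Set.Icc (xi a b N j) (xi a b N (j + 1))) : 0 ≤ F x := by
  rcases le_total x (mid a b N j) with hc | hc
  · have h0 : F (xi a b N j) ≤ F x :=
      Fmono hab hN hH hF hj ⟨le_refl _, (xi_lt_mid hab hN j).le⟩ ⟨hx.1, hc⟩ hx.1
    rwa [Fnode hF hj.le] at h0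
  · have h0 : F (xi a b N (j+1)) ≤ F x :=
      Fanti hab hN hH hF hj ⟨hc, hx.2⟩ ⟨(mid_lt_xi hab hN j).le, le_refl _⟩ hx.2
    rwa [Fnode hF hj] at h0

lemma Fle (hab : a < b) (hN : 0 < N) (hH : ∀ j, 0 ≤ H j)
    (hF : IsTriangleFun a b N H F) {j : ℕ} (hj : j < N) {x : ℝ}
    (hx : x ∈ Set.Icc (xi a b N j) (xi a b N (j + 1))) : F x ≤ H j := by
  rcases le_total x (mid a b N j) with hc | hc
  · have h0 : F x ≤ F (mid a b N j) :=
      Fmono hab hN hH hF hj ⟨hx.1, hc⟩ ⟨(xi_lt_mid hab hN j).le, le_refl _⟩ hc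
    rwa [Fmid hF hj] at h0
  · have h0 : F x ≤ F (mid a b N j) :=
      Fanti hab hN hH hF hj ⟨le_refl _, (mid_lt_xi hab hN j).le⟩ ⟨hc, hx.2⟩ hc
    rwa [Fmid hF hj] at h0


noncomputable def idx (a b : ℝ) (N : ℕ) (x : ℝ) : ℕ := min (N-1) ⌊(x-a)/((b-a)/N)⌋₊

lemma idx_spec (hab : a < b) (hN : 0 < N) {x : ℝ} (hx : x ∈ Set.Icc a b) :
    idx a b N x < N ∧ xi a b N (idx a b N x) ≤ x ∧ x ≤ xi a b N (idx a b N x + 1) := by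
  have hp := h_pos hab hN
  set r : ℝ := (x - a)/((b - a)/N) with hr
  have hr0 : 0 ≤ r := div_nonneg (by linarith [hx.1]) hp.le
  have hNr : (N : ℝ) ≠ 0 := by exact_mod_cast hN.ne'
  refine ⟨lt_of_le_of_lt (min_le_left _ _) (Nat.pred_lt hN.ne'), ?_, ?_⟩
  · have h1 : (idx a b N x : ℝ) ≤ r := by
      have h2 : idx a b N x ≤ ⌊r⌋₊ := min_le_right _ _
      exact le_trans (by exact_mod_cast h2) (Nat.floor_le hr0)
    unfold xi
    have : (idx a b N x : ℝ) * ((b-a)/N) ≤ r * ((b-a)/N) := by nlinarith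
    have hrx : r * ((b-a)/N) = x - a := div_mul_cancel₀ _ (ne_of_gt hp)
    linarith
  · by_cases hc : ⌊r⌋₊ ≤ N - 1
    · have hidx : idx a b N x = ⌊r⌋₊ := min_eq_right hc
      have h2 : r < ⌊r⌋₊ + 1 := Nat.lt_floor_add_one r
      rw [xi_succ, hidx]
      have hrx : r * ((b-a)/N) = x - a := div_mul_cancel₀ _ (ne_of_gt hp)
      nlinarith
    · push_neg at hc
      have hcc : N - 1 + 1 = N := Nat.succ_pred_eq_of_pos hN
      have hNf : N ≤ ⌊r⌋₊ := by omega
      have h2 : (N : ℝ) ≤ r := (Nat.le_floor_iff hr0).mp hNf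
      have hidx : idx a b N x = N - 1 := by
        unfold idx; rw [← hr]; exact min_eq_left (by omega)
      have hrx : r * ((b-a)/N) = x - a := div_mul_cancel₀ _ (ne_of_gt hp)
      have hxiN : a + (N:ℝ) * ((b-a)/N) = b := xi_N hN
      have hxb : b ≤ x := by nlinarith [mul_le_mul_of_nonneg_right h2 hp.le]
      have hxb' : x = b := le_antisymm hx.2 hxb
      rw [hidx, hxb', show N - 1 + 1 = N from hcc, xi_N hN]

lemma idx_step (hab : a < b) (hN : 0 < N) {x y : ℝ} (hx : x ∈ Set.Icc a b)
    (hy : y ∈ Set.Icc a b) (hstep : xi a b N (idx a b N x + 1) < y) :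
    idx a b N x + 1 ≤ idx a b N y := by
  have hp := h_pos hab hN
  set r : ℝ := (y - a)/((b - a)/N) with hr
  have hrx : r * ((b-a)/N) = y - a := div_mul_cancel₀ _ (ne_of_gt hp)
  have h1 : ((idx a b N x : ℝ) + 1) < r := by
    rw [xi_succ] at hstep
    nlinarith
  have h2 : idx a b N x + 1 ≤ ⌊r⌋₊ := by
    apply Nat.le_floor
    push_cast
    exact h1.le
  have h3 : ((idx a b N x : ℝ) + 1) < N := by
    have hxiN : a + (N:ℝ) * ((b-a)/N) = b := xi_N hN
    have : r ≤ N := le_of_mul_le_mul_right (by nlinarith [hy.2]) hp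
    linarith
  have h4 : idx a b N x + 1 ≤ N - 1 := by
    have : idx a b N x + 1 < N := by exact_mod_cast h3
    omega
  exact le_min h4 h2


lemma tf_red (hp01 : 0 ≤ a) (hab : a < b) (hb1 : b ≤ 1) (hN : 0 < N)
    (hH : ∀ j, 0 ≤ H j) (hF : IsTriangleFun a b N H F)
    {x y : ℝ} (hx : 0 ≤ x) (hxy : x ≤ y) (hy : y ≤ 1) :
    ∃ j α' β', j < N ∧ xi a b N j ≤ α' ∧ α' ≤ β' ∧ β' ≤ xi a b N (j+1) ∧
      Set.Ioo α' β' ⊆ Set.Ioo x y ∧ |F y - F x| ≤ |F β' - F α'| := by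
  have hp := h_pos hab hN
  have hxi01 : xi a b N 0 < xi a b N 1 := by
    have := xi_le_xi hab hN (le_refl 1)
    unfold xi; simp; nlinarith
  -- trivial candidate when the increment is zero
  have htriv : ∀ (hzero : F y - F x = 0), _ := fun _ => trivial
  by_cases h1 : y ≤ a
  · -- F x = F y = 0
    have hFy : F y = 0 := by
      rcases eq_or_lt_of_le h1 with rfl | hlt
      · have h0 := Fnode (N := N) (H := H) hF (Nat.zero_le N); rwa [xi_zero] at h0
      · exact hF.2.2.1 y ⟨by linarith, hy⟩ (by simp [Set.mem_Icc]; intro h; linarith)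
    have hFx : F x = 0 := by
      rcases eq_or_lt_of_le (le_trans hxy h1) with rfl | hlt
      · have h0 := Fnode (N := N) (H := H) hF (Nat.zero_le N); rwa [xi_zero] at h0
      · exact hF.2.2.1 x ⟨hx, by linarith⟩ (by simp [Set.mem_Icc]; intro h; linarith)
    exact ⟨0, xi a b N 0, xi a b N 0, hN, le_refl _, le_refl _, hxi01.le,
      by simp, by simp [hFx, hFy]⟩
  by_cases h2 : b ≤ x
  · have hFy : F y = 0 := by
      rcases eq_or_lt_of_le (le_trans h2 hxy) with heq | hlt
      · have h0 := Fnode (H := H) hF (le_refl N); rw [xi_N hN] at h0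
        rw [← heq]; exact h0
      · exact hF.2.2.1 y ⟨by linarith, hy⟩ (by simp [Set.mem_Icc]; intro h; linarith)
    have hFx : F x = 0 := by
      rcases eq_or_lt_of_le h2 with heq | hlt
      · have h0 := Fnode (H := H) hF (le_refl N); rw [xi_N hN] at h0
        rw [← heq]; exact h0
      · exact hF.2.2.1 x ⟨by linarith, by linarith⟩ (by simp [Set.mem_Icc]; intro h; linarith)
    exact ⟨0, xi a b N 0, xi a b N 0, hN, le_refl _, le_refl _, hxi01.le,
      by simp, by simp [hFx, hFy]⟩
  push_neg at h1 h2
  -- clip to [a, b]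
  set x' : ℝ := max x a with hx'
  set y' : ℝ := min y b with hy'
  have hx'm : x' ∈ Set.Icc a b := ⟨le_max_right _ _, max_le h2.le hab.le⟩
  have hy'm : y' ∈ Set.Icc a b := ⟨le_min h1.le hab.le, min_le_right _ _⟩
  have hxx' : x ≤ x' := le_max_left _ _
  have hyy' : y' ≤ y := min_le_left _ _
  have hx'y' : x' ≤ y' := max_le (le_min hxy h2.le) (le_min h1.le hab.le)
  have hFx' : F x' = F x := by
    rcases le_or_gt a x with hc | hc
    · rw [hx', max_eq_left hc]
    · rw [hx', max_eq_right hc.le]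
      rw [hF.2.2.1 x ⟨hx, by linarith⟩ (by simp [Set.mem_Icc]; intro h; linarith)]
      have h0 := Fnode (N := N) (H := H) hF (Nat.zero_le N); rwa [xi_zero] at h0
  have hFy' : F y' = F y := by
    rcases le_or_gt y b with hc | hc
    · rw [hy', min_eq_left hc]
    · rw [hy', min_eq_right hc.le]
      rw [hF.2.2.1 y ⟨by linarith, hy⟩ (by simp [Set.mem_Icc]; intro h; linarith)]
      have h0 := Fnode (H := H) hF (le_refl N); rwa [xi_N hN] at h0
  obtain ⟨hj1N, hj1l, hj1r⟩ := idx_spec hab hN hx'm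
  set j1 := idx a b N x' with hj1
  by_cases hc : y' ≤ xi a b N (j1 + 1)
  · exact ⟨j1, x', y', hj1N, hj1l, hx'y', hc,
      Set.Ioo_subset_Ioo hxx' hyy', by rw [hFx', hFy']⟩
  · push_neg at hc
    obtain ⟨hj2N, hj2l, hj2r⟩ := idx_spec hab hN hy'm
    set j2 := idx a b N y' with hj2
    have hstep : (j1 : ℕ) + 1 ≤ j2 := idx_step hab hN hx'm hy'm hc
    have hnode1 : F (xi a b N (j1 + 1)) = 0 := Fnode hF hj1N
    have hnode2 : F (xi a b N j2) = 0 := Fnode hF hj2N.le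
    have hFx'0 : 0 ≤ F x' := Fnonneg hab hN hH hF hj1N ⟨hj1l, hj1r⟩
    have hFy'0 : 0 ≤ F y' := Fnonneg hab hN hH hF hj2N ⟨hj2l, hj2r⟩
    have hxij2 : x ≤ xi a b N j2 :=
      le_trans hxx' (le_trans hj1r (xi_le_xi hab hN hstep))
    rcases le_total (F y') (F x') with hcmp | hcmp
    · refine ⟨j1, x', xi a b N (j1+1), hj1N, hj1l, hj1r, le_refl _,
        Set.Ioo_subset_Ioo hxx' (by linarith), ?_⟩
      rw [hFx', hFy'] at *
      rw [hnode1, zero_sub, abs_neg, abs_of_nonneg hFx'0]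
      rw [abs_sub_comm, abs_of_nonneg (by linarith)]
      linarith
    · refine ⟨j2, xi a b N j2, y', hj2N, le_refl _, hj2l, hj2r,
        Set.Ioo_subset_Ioo hxij2 hyy', ?_⟩
      rw [hFx', hFy'] at *
      rw [hnode2, sub_zero, abs_of_nonneg hFy'0]
      rw [abs_of_nonneg (by linarith)]
      linarith


end TriAux

lemma TriAux.sum_halve (M : ℕ) (g : ℕ → ℝ) :
    ∑ n ∈ Finset.range (2*M), g (n/2) = 2 * ∑ j ∈ Finset.range M, g j := by
  induction M with
  | zero => simp
  | succ M ih =>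
    have h1 : 2 * (M+1) = (2*M + 1) + 1 := by ring
    rw [h1, Finset.sum_range_succ, Finset.sum_range_succ, ih, Finset.sum_range_succ]
    have h2 : (2*M)/2 = M := by omega
    have h3 : (2*M+1)/2 = M := by omega
    rw [h2, h3]; ring


lemma TriAux.tf_upper {p a b : ℝ} {N : ℕ} {H : ℕ → ℝ} {F : ℝ → ℝ}
    (hp : 1 ≤ p) (hp01 : 0 ≤ a) (hab : a < b) (hb1 : b ≤ 1) (hN : 0 < N)
    (hH : ∀ j, 0 ≤ H j) (hF : IsTriangleFun a b N H F)
    (A B : ℕ → ℝ) (hNO : Nonoverlapping A B)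
    (s : Finset ℕ) :
    ∑ n ∈ s, |F (B n) - F (A n)| ^ p ≤ 2 * ∑ j ∈ Finset.range N, H j ^ p := by
  classical
  choose J α β hJN hl hm hr hsub hle using fun n =>
    TriAux.tf_red hp01 hab hb1 hN hH hF (hNO.1 n).1 (hNO.1 n).2.1 (hNO.1 n).2.2
  calc ∑ n ∈ s, |F (B n) - F (A n)| ^ p ≤ ∑ n ∈ s, |F (β n) - F (α n)| ^ p :=
        Finset.sum_le_sum (fun n _ =>
          Real.rpow_le_rpow (abs_nonneg _) (hle n) (by positivity))
    _ = ∑ j ∈ Finset.range N, ∑ n ∈ s.filter (fun n => J n = j), |F (β n) - F (α n)| ^ p :=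
        (Finset.sum_fiberwise_of_maps_to (fun n _ => Finset.mem_range.mpr (hJN n)) _).symm
    _ ≤ ∑ j ∈ Finset.range N, 2 * H j ^ p := by
        apply Finset.sum_le_sum
        intro j hj
        have hjN : j < N := Finset.mem_range.mp hj
        refine TriAux.lemC hp (TriAux.xi a b N j) (TriAux.mid a b N j) (TriAux.xi a b N (j+1))
          (TriAux.xi_lt_mid hab hN j).le (TriAux.mid_lt_xi hab hN j).le F (H j)
          (TriAux.Fmono hab hN hH hF hjN) (TriAux.Fanti hab hN hH hF hjN)
          (TriAux.Fnode hF hjN.le) (TriAux.Fnode hF hjN) (TriAux.Fmid hF hjN) _ α β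
          (fun n hn => ?_) (fun m hm' n hn' hmn => ?_)
        · rw [Finset.mem_filter] at hn
          rw [← hn.2]
          exact ⟨hl n, hm n, hr n⟩
        · exact Set.subset_eq_empty
            ((Set.inter_subset_inter (hsub m) (hsub n)).trans (hNO.2 m n hmn).subset)
            rfl
    _ = 2 * ∑ j ∈ Finset.range N, H j ^ p := by rw [Finset.mul_sum]

end TriAuxLemmas

/-- The `p`-variation of the triangle function equals `2^{1/p} (∑_{j<N} H_j^p)^{1/p}`. -/
theorem stmt4 (p : ℝ) (hp : 1 ≤ p) (a b : ℝ) (ha : 0 ≤ a) (hab : a < b) (hb : b ≤ 1)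
    (N : ℕ) (hN : 0 < N) (H : ℕ → ℝ) (hH : ∀ j, 0 ≤ H j)
    (F : ℝ → ℝ) (hF : IsTriangleFun a b N H F) :
    vp p F = ENNReal.ofReal ((2 : ℝ) ^ (1 / p) * (∑ j ∈ Finset.range N, H j ^ p) ^ (1 / p)) := by
  classical
  have hp0 : (0:ℝ) < p := by linarith
  have hq : 0 < (b - a) / N / 2 := by
    have := TriAux.h_pos hab hN; linarith
  have hSnn : 0 ≤ ∑ j ∈ Finset.range N, H j ^ p :=
    Finset.sum_nonneg fun j _ => Real.rpow_nonneg (hH j) p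
  set S : ℝ := 2 * ∑ j ∈ Finset.range N, H j ^ p with hS
  have hSnn2 : 0 ≤ S := by rw [hS]; linarith
  have htarget : ENNReal.ofReal ((2 : ℝ) ^ (1 / p) * (∑ j ∈ Finset.range N, H j ^ p) ^ (1 / p))
      = ENNReal.ofReal S ^ (1 / p) := by
    rw [ENNReal.ofReal_rpow_of_nonneg hSnn2 (by positivity), hS,
      Real.mul_rpow (by norm_num) hSnn]
  rw [htarget]
  apply le_antisymm
  · -- upper bound
    apply iSup_le; intro A; apply iSup_le; intro B; apply iSup_le; intro hNO
    apply ENNReal.rpow_le_rpow _ (by positivity)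
    apply tsum_le_of_sum_le' zero_le
    intro s
    rw [← ENNReal.ofReal_sum_of_nonneg (fun n _ => Real.rpow_nonneg (abs_nonneg _) p)]
    exact ENNReal.ofReal_le_ofReal (TriAux.tf_upper hp ha hab hb hN hH hF A B hNO s)
  · -- lower bound
    set q : ℝ := (b - a) / N / 2 with hqdef
    set A : ℕ → ℝ := fun n => if n < 2*N then a + n * q else 1 with hA
    set B : ℕ → ℝ := fun n => if n < 2*N then a + (n+1) * q else 1 with hB
    have h2Nq : a + (2*N : ℕ) * q = b := by
      have hxiN : a + (N:ℝ) * ((b-a)/N) = b := TriAux.xi_N hN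
      push_cast
      rw [hqdef]; linear_combination hxiN
    have hNO : Nonoverlapping A B := by
      constructor
      · intro n
        by_cases hn : n < 2*N
        · have hn' : ((n:ℝ)+1) ≤ (2*N : ℕ) := by exact_mod_cast hn
          simp only [hA, hB, if_pos hn]
          refine ⟨by positivity, by nlinarith, ?_⟩
          calc a + ((n:ℝ)+1) * q ≤ a + ((2*N : ℕ):ℝ) * q := by nlinarith
            _ = b := h2Nq
            _ ≤ 1 := hb
        · simp [hA, hB, if_neg hn]
      · have key : ∀ m n : ℕ, m < n →
            Set.Ioo (A m) (B m) ∩ Set.Ioo (A n) (B n) = ∅ := by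
          intro m n hmn
          by_cases hn : n < 2*N
          · have hm : m < 2*N := lt_trans hmn hn
            have hmn' : ((m:ℝ)+1) ≤ (n:ℝ) := by exact_mod_cast hmn
            simp only [hA, hB, if_pos hn, if_pos hm]
            apply Set.eq_empty_iff_forall_notMem.mpr
            rintro t ⟨⟨_, ht1⟩, ⟨ht2, _⟩⟩
            nlinarith
          · simp [hA, hB, if_neg hn]
        intro m n hmn
        rcases lt_or_gt_of_ne hmn with h | h
        · exact key m n h
        · rw [Set.inter_comm]; exact key n m h
    have hterm : ∀ n, n < 2*N → |F (B n) - F (A n)| ^ p = H (n/2) ^ p := by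
      intro n hn
      rcases Nat.even_or_odd n with ⟨j, hj⟩ | ⟨j, hj⟩
      · have hjN : j < N := by omega
        have hdiv : n / 2 = j := by omega
        have hAe : A n = a + (j:ℝ) * ((b - a) / N) := by
          simp only [hA]; rw [if_pos hn, hj]; push_cast; rw [hqdef]; ring
        have hBe : B n = a + ((j:ℝ) + 1/2) * ((b - a) / N) := by
          simp only [hB]; rw [if_pos hn, hj]; push_cast; rw [hqdef]; ring
        rw [hAe, hBe, hdiv]
        rw [hF.2.2.2.1 j hjN.le, hF.2.2.2.2.1 j hjN, sub_zero, abs_of_nonneg (hH j)]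
      · have hjN : j < N := by omega
        have hdiv : n / 2 = j := by omega
        have hAe : A n = a + ((j:ℝ) + 1/2) * ((b - a) / N) := by
          simp only [hA]; rw [if_pos hn, hj]; push_cast; rw [hqdef]; ring
        have hBe : B n = a + ((j:ℝ) + 1) * ((b - a) / N) := by
          simp only [hB]; rw [if_pos hn, hj]; push_cast; rw [hqdef]; ring
        have hBe' : B n = a + ((j+1 : ℕ):ℝ) * ((b - a) / N) := by rw [hBe]; push_cast; ring
        rw [hAe, hBe', hdiv]
        rw [hF.2.2.2.1 (j+1) hjN, hF.2.2.2.2.1 j hjN, zero_sub, abs_neg, abs_of_nonneg (hH j)]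
    have hval : vpSum p F A B = ENNReal.ofReal S := by
      unfold vpSum
      rw [tsum_eq_sum (s := Finset.range (2*N)) ?_]
      · calc ∑ n ∈ Finset.range (2*N), ENNReal.ofReal (|F (B n) - F (A n)| ^ p)
            = ∑ n ∈ Finset.range (2*N), ENNReal.ofReal (H (n/2) ^ p) := by
              apply Finset.sum_congr rfl
              intro n hn
              rw [hterm n (Finset.mem_range.mp hn)]
          _ = ENNReal.ofReal (∑ n ∈ Finset.range (2*N), H (n/2) ^ p) :=
              (ENNReal.ofReal_sum_of_nonneg
                (fun n _ => Real.rpow_nonneg (hH _) p)).symm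
          _ = ENNReal.ofReal S := by
              rw [TriAux.sum_halve N (fun j => H j ^ p)]
      · intro n hn
        have hn' : ¬ n < 2*N := fun hc => hn (Finset.mem_range.mpr hc)
        simp only [hA, hB, if_neg hn']
        rw [sub_self, abs_zero, Real.zero_rpow hp0.ne', ENNReal.ofReal_zero]
    calc ENNReal.ofReal S ^ (1/p) = vpSum p F A B ^ (1/p) := by rw [hval]
      _ ≤ vp p F := le_iSup_of_le A (le_iSup_of_le B (le_iSup_of_le hNO le_rfl))
end
end

section
/- Let {I_j} be a sequence of nonoverlapping intervals contained in a period (so Σ_j |I_j| ≤ 1). For k ≥ 0 let σ_k = { j : 2^{-k-1} < |I_j| ≤ 2^{-k} }, and define δ_n by card(σ_0 ∪ ⋯ ∪ σ_n) = 2^n δ_n. Then Σ_{n=0}^∞ δ_n ≤ 4. -/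
open scoped ENNReal
open Filter MeasureTheory

noncomputable section

lemma key_pow (n : ℕ) : (2 : ℝ) ^ (-(n : ℝ) - 1) = (2⁻¹ : ℝ) ^ n * 2⁻¹ := by
  rw [show -(n:ℝ)-1 = -((n:ℝ)+1) by ring, Real.rpow_neg (by norm_num),
    Real.rpow_add (by norm_num), Real.rpow_natCast, Real.rpow_one, mul_inv, inv_pow]

lemma inner_sum7 (L : ℝ) :
    ∑' n : ℕ, (if (2:ℝ) ^ (-(n:ℝ)-1) < L then (2⁻¹ : ℝ≥0∞) ^ n else 0)
      ≤ 4 * ENNReal.ofReal L := by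
  classical
  by_cases hL : 0 < L
  · have hex : ∃ n : ℕ, (2:ℝ) ^ (-(n:ℝ)-1) < L := by
      obtain ⟨n, hn⟩ := exists_pow_lt_of_lt_one hL (by norm_num : (2⁻¹:ℝ) < 1)
      exact ⟨n, by rw [key_pow]; nlinarith [pow_pos (by norm_num : (0:ℝ) < 2⁻¹) n]⟩
    set n0 := Nat.find hex with hn0
    have hP0 : (2:ℝ) ^ (-(n0:ℝ)-1) < L := Nat.find_spec hex
    have hmono : ∀ n : ℕ, ((2:ℝ) ^ (-(n:ℝ)-1) < L) ↔ n0 ≤ n := by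
      intro n
      constructor
      · intro h; exact Nat.find_le h
      · intro h
        refine lt_of_le_of_lt ?_ hP0
        rw [key_pow, key_pow]
        exact mul_le_mul_of_nonneg_right
          (pow_le_pow_of_le_one (by norm_num) (by norm_num) h) (by norm_num)
    have heq : ∀ n : ℕ, (if (2:ℝ) ^ (-(n:ℝ)-1) < L then (2⁻¹ : ℝ≥0∞) ^ n else 0)
        = (if n0 ≤ n then (2⁻¹ : ℝ≥0∞) ^ n else 0) := by
      intro n; simp [hmono n]
    rw [tsum_congr heq]
    have hshift : ∑' n : ℕ, (if n0 ≤ n then (2⁻¹ : ℝ≥0∞) ^ n else 0)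
        = ∑' m : ℕ, (2⁻¹ : ℝ≥0∞) ^ (m + n0) := by
      rw [← Function.Injective.tsum_eq (f := fun n => if n0 ≤ n then (2⁻¹ : ℝ≥0∞) ^ n else 0)
        (g := fun m : ℕ => m + n0) (add_left_injective n0) ?_]
      · refine tsum_congr fun m => ?_
        simp [Nat.le_add_left]
      · intro n hn
        simp only [Function.mem_support, ne_eq, ite_eq_right_iff, not_forall] at hn
        exact ⟨n - n0, Nat.sub_add_cancel hn.1⟩
    rw [hshift]
    have : ∑' m : ℕ, (2⁻¹ : ℝ≥0∞) ^ (m + n0) = 2 * (2⁻¹ : ℝ≥0∞) ^ n0 := by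
      simp_rw [pow_add]
      rw [ENNReal.tsum_mul_right, ENNReal.tsum_geometric]
      congr 1
      rw [ENNReal.one_sub_inv_two, inv_inv]
    rw [this]
    calc 2 * (2⁻¹ : ℝ≥0∞) ^ n0 = 4 * ENNReal.ofReal ((2⁻¹:ℝ)^n0 * 2⁻¹) := by
          rw [ENNReal.ofReal_mul (by positivity), ENNReal.ofReal_pow (by norm_num),
            show ENNReal.ofReal (2⁻¹:ℝ) = 2⁻¹ from by
              rw [ENNReal.ofReal_inv_of_pos (by norm_num)]; norm_num,
            mul_comm ((2⁻¹:ℝ≥0∞) ^ n0) 2⁻¹, ← mul_assoc,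
            show (4:ℝ≥0∞) * 2⁻¹ = 2 from by
              rw [show (4:ℝ≥0∞) = 2*2 by norm_num, mul_assoc,
                ENNReal.mul_inv_cancel (by norm_num) (by norm_num), mul_one]]
      _ ≤ 4 * ENNReal.ofReal L := by
          gcongr
          rw [← key_pow]; exact hP0.le
  · have : ∀ n : ℕ, ¬ ((2:ℝ) ^ (-(n:ℝ)-1) < L) := by
      intro n h
      exact hL (lt_trans (Real.rpow_pos_of_pos (by norm_num) _) h)
    simp [this]


/-- If `{I_j}` are nonoverlapping intervals in a period, `σ_k = {j : 2^{-k-1} < |I_j| ≤ 2^{-k}}`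
and `card(σ_0 ∪ ⋯ ∪ σ_n) = 2^n δ_n`, then `∑ δ_n ≤ 4`.  Since all lengths are `≤ 1`,
`σ_0 ∪ ⋯ ∪ σ_n = {j : 2^{-n-1} < b_j - a_j}`. -/
theorem stmt6 (a b : ℕ → ℝ) (hab : Nonoverlapping a b) :
    ∑' n : ℕ, (({j : ℕ | (2 : ℝ) ^ (-(n : ℝ) - 1) < b j - a j}.ncard : ℝ) / 2 ^ n) ≤ 4 := by
  
  classical
  set S : ℕ → Set ℕ := fun n => {j : ℕ | (2 : ℝ) ^ (-(n : ℝ) - 1) < b j - a j} with hS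
  set f : ℕ → ℕ → ℝ≥0∞ :=
    fun n j => if (2:ℝ) ^ (-(n:ℝ)-1) < b j - a j then (2⁻¹ : ℝ≥0∞) ^ n else 0 with hf
  -- total length bound
  have hlen : ∑' j, ENNReal.ofReal (b j - a j) ≤ 1 := by
    have hdisj : Pairwise (Function.onFun Disjoint fun j => Set.Ioo (a j) (b j)) :=
      fun m n h => Set.disjoint_iff_inter_eq_empty.mpr (hab.2 m n h)
    have hm := measure_iUnion (μ := volume) hdisj (fun j => measurableSet_Ioo)
    calc ∑' j, ENNReal.ofReal (b j - a j) = ∑' j, volume (Set.Ioo (a j) (b j)) := by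
          simp [Real.volume_Ioo]
      _ = volume (⋃ j, Set.Ioo (a j) (b j)) := hm.symm
      _ ≤ volume (Set.Icc (0:ℝ) 1) := by
          refine measure_mono (Set.iUnion_subset fun j x hx => ?_)
          exact ⟨le_of_lt (lt_of_le_of_lt (hab.1 j).1 hx.1),
            le_of_lt (lt_of_lt_of_le hx.2 (hab.1 j).2.2)⟩
      _ = 1 := by simp
  -- double sum bound
  have hsum4 : ∑' n : ℕ, ∑' j : ℕ, f n j ≤ 4 := by
    rw [ENNReal.tsum_comm]
    calc ∑' j, ∑' n, f n j ≤ ∑' j, 4 * ENNReal.ofReal (b j - a j) :=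
          ENNReal.tsum_le_tsum fun j => inner_sum7 _
      _ = 4 * ∑' j, ENNReal.ofReal (b j - a j) := ENNReal.tsum_mul_left
      _ ≤ 4 * 1 := by gcongr
      _ = 4 := mul_one 4
  -- card bound per n
  have hcard : ∀ n : ℕ, (((S n).ncard : ℝ≥0∞)) * (2⁻¹) ^ n ≤ ∑' j, f n j := by
    intro n
    by_cases hfin : (S n).Finite
    · have hle := ENNReal.sum_le_tsum (f := f n) hfin.toFinset
      refine le_trans (le_of_eq ?_) hle
      rw [Set.ncard_eq_toFinset_card (S n) hfin,
        show ∑ j ∈ hfin.toFinset, f n j = ∑ _j ∈ hfin.toFinset, (2⁻¹ : ℝ≥0∞) ^ n from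
          Finset.sum_congr rfl fun j hj => by
            have hjm := hfin.mem_toFinset.mp hj
            simp only [hS, Set.mem_setOf_eq] at hjm
            simp [hf, hjm],
        Finset.sum_const, nsmul_eq_mul]
    · rw [Set.Infinite.ncard hfin]
      simp
  -- ENNReal bound on the target terms
  have h5 : ∑' n : ℕ, ENNReal.ofReal (((S n).ncard : ℝ) / 2 ^ n) ≤ 4 := by
    refine le_trans (ENNReal.tsum_le_tsum fun n => ?_) hsum4
    have : ENNReal.ofReal (((S n).ncard : ℝ) / 2 ^ n)
        = (((S n).ncard : ℝ≥0∞)) * (2⁻¹) ^ n := by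
      rw [div_eq_mul_inv, ← inv_pow, ENNReal.ofReal_mul (by positivity),
        ENNReal.ofReal_natCast, ENNReal.ofReal_pow (by norm_num),
        show ENNReal.ofReal (2⁻¹:ℝ) = 2⁻¹ from by
          rw [ENNReal.ofReal_inv_of_pos (by norm_num)]; norm_num]
    rw [this]; exact hcard n
  -- pass to real numbers
  have hto : (∑' n : ℕ, ENNReal.ofReal (((S n).ncard : ℝ) / 2 ^ n)).toReal
      = ∑' n : ℕ, (((S n).ncard : ℝ) / 2 ^ n) := by
    rw [ENNReal.tsum_toReal_eq (fun n => ENNReal.ofReal_ne_top)]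
    exact tsum_congr fun n => ENNReal.toReal_ofReal (by positivity)
  rw [show (fun n : ℕ => (({j : ℕ | (2 : ℝ) ^ (-(n : ℝ) - 1) < b j - a j}.ncard : ℝ) / 2 ^ n))
      = fun n : ℕ => (((S n).ncard : ℝ) / 2 ^ n) from rfl, ← hto]
  calc (∑' n : ℕ, ENNReal.ofReal (((S n).ncard : ℝ) / 2 ^ n)).toReal
      ≤ (4 : ℝ≥0∞).toReal := ENNReal.toReal_mono (by norm_num) h5
    _ = 4 := by norm_num
end
end

section
/- Let 1 < p < ∞ and p' = p/(p−1). Suppose f is a bounded 1-periodic function with f ∉ V_p, i.e. there is a sequence {J_n} of nonoverlapping intervals contained in a period with Σ_n |f(J_n)|^p = ∞. Then there exists a positive nondecreasing sequence Λ = {λ_n} with λ_n → ∞, Σ_n 1/λ_n = ∞, and Σ_n (1/λ_n)^{p'} < ∞, such that f ∉ ΛBV (i.e. v_Λ(f) = ∞). -/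
open scoped ENNReal
open Filter MeasureTheory

noncomputable section

lemma key_ineq {q a b : ℝ} (hq : 1 < q) (ha : 0 < a) (hab : a ≤ b) :
    (b - a) / b ^ q ≤ (a ^ (1 - q) - b ^ (1 - q)) / (q - 1) := by
  have hb : 0 < b := lt_of_lt_of_le ha hab
  set t : ℝ := a / b with ht
  have ht0 : 0 < t := div_pos ha hb
  have ht1 : t ≤ 1 := (div_le_one hb).2 hab
  have htb : t * b = a := by rw [ht]; exact div_mul_cancel₀ a hb.ne'
  have core : 1 + (q - 1) * (1 - t) ≤ t ^ (1 - q) := by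
    have h1 : (q - 1) * (1 - t) + 1 ≤ Real.exp ((q - 1) * (1 - t)) := Real.add_one_le_exp _
    have hl : Real.log t ≤ t - 1 := Real.log_le_sub_one_of_pos ht0
    have h2 : (q - 1) * (1 - t) ≤ Real.log t * (1 - q) := by nlinarith
    have h3 : Real.exp ((q - 1) * (1 - t)) ≤ Real.exp (Real.log t * (1 - q)) :=
      Real.exp_le_exp.2 h2
    have h4 : Real.exp (Real.log t * (1 - q)) = t ^ (1 - q) :=
      (Real.rpow_def_of_pos ht0 _).symm
    linarith [h1, h3, h4.le, h4.ge]
  have hbq : (0:ℝ) < b ^ q := Real.rpow_pos_of_pos hb q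
  rw [div_le_div_iff₀ hbq (by linarith : (0:ℝ) < q - 1)]
  have e1 : a ^ (1 - q) = t ^ (1 - q) * b ^ (1 - q) := by
    rw [← htb, Real.mul_rpow ht0.le hb.le]
  have e2 : b ^ (1 - q) * b ^ q = b := by
    rw [← Real.rpow_add hb]; norm_num
  have hbq1 : (0:ℝ) < b ^ (1 - q) := Real.rpow_pos_of_pos hb _
  calc (b - a) * (q - 1) = ((1 + (q - 1) * (1 - t)) - 1) * b := by
        rw [← htb]; ring
    _ ≤ (t ^ (1 - q) - 1) * b := by nlinarith [core, hb]
    _ = (a ^ (1 - q) - b ^ (1 - q)) * b ^ q := by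
        have e3 : (a ^ (1 - q) - b ^ (1 - q)) * b ^ q = t ^ (1 - q) * b - b := by
          rw [e1, sub_mul, mul_assoc, e2]
        rw [e3]; ring

lemma AD_div (u : ℕ → ℝ) (hu : ∀ n, 0 < u n) (hns : ¬ Summable u) :
    ¬ Summable (fun n => u n / (∑ i ∈ Finset.range (n + 1), u i)) := by
  set s : ℕ → ℝ := fun n => ∑ i ∈ Finset.range (n + 1), u i with hs
  have hs0 : ∀ n, 0 < s n := fun n =>
    Finset.sum_pos (fun i _ => hu i) ⟨0, Finset.mem_range.2 (Nat.succ_pos n)⟩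
  have hsmono : Monotone s := fun m n h =>
    Finset.sum_le_sum_of_subset_of_nonneg
      (Finset.range_subset_range.2 (by omega)) (fun i _ _ => (hu i).le)
  have hstop : Tendsto s atTop atTop := by
    have h1 := (not_summable_iff_tendsto_nat_atTop_of_nonneg (fun n => (hu n).le)).1 hns
    exact h1.comp (tendsto_add_atTop_nat 1)
  intro hsum
  rw [summable_iff_vanishing] at hsum
  obtain ⟨t, ht⟩ := hsum (Set.Iio (1/2 : ℝ)) (Iio_mem_nhds (by norm_num))
  set N : ℕ := t.sup id + 1 with hN
  obtain ⟨m, hm1, hm2⟩ :=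
    ((hstop.eventually_ge_atTop (2 * s N)).and (eventually_ge_atTop (N + 1))).exists
  have hdisj : Disjoint (Finset.Ico (N + 1) (m + 1)) t := by
    rw [Finset.disjoint_left]
    intro k hk hkt
    have h1 : N + 1 ≤ k := (Finset.mem_Ico.1 hk).1
    have h2 : k ≤ t.sup id := Finset.le_sup (f := id) hkt
    omega
  have hlt := ht _ hdisj
  simp only [Set.mem_Iio] at hlt
  have hsum_eq : ∑ k ∈ Finset.Ico (N + 1) (m + 1), u k = s m - s N := by
    rw [Finset.sum_Ico_eq_sub _ (by omega)]
  have hge : (s m - s N) / s m ≤ ∑ k ∈ Finset.Ico (N + 1) (m + 1), u k / s k := by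
    rw [← hsum_eq, Finset.sum_div]
    refine Finset.sum_le_sum (fun k hk => ?_)
    have hk2 : k ≤ m := by have := (Finset.mem_Ico.1 hk).2; omega
    exact div_le_div_of_nonneg_left (hu k).le (hs0 k) (hsmono hk2)
  have hhalf : (1:ℝ)/2 ≤ (s m - s N) / s m := by
    rw [le_div_iff₀ (hs0 m)]
    linarith [hm1]
  linarith

lemma AD_conv (q : ℝ) (hq : 1 < q) (u : ℕ → ℝ) (hu : ∀ n, 0 < u n) :
    Summable (fun n => u n / (∑ i ∈ Finset.range (n + 1), u i) ^ q) := by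
  set s : ℕ → ℝ := fun n => ∑ i ∈ Finset.range (n + 1), u i with hs
  have hs0 : ∀ n, 0 < s n := fun n =>
    Finset.sum_pos (fun i _ => hu i) ⟨0, Finset.mem_range.2 (Nat.succ_pos n)⟩
  have hsmono : Monotone s := fun m n h =>
    Finset.sum_le_sum_of_subset_of_nonneg
      (Finset.range_subset_range.2 (by omega)) (fun i _ _ => (hu i).le)
  have hnonneg : ∀ n, 0 ≤ u n / s n ^ q := fun n =>
    div_nonneg (hu n).le (Real.rpow_nonneg (hs0 n).le q)
  apply summable_of_sum_range_le (c := u 0 / s 0 ^ q + s 0 ^ (1 - q) / (q - 1)) hnonneg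
  intro N
  cases N with
  | zero =>
      simp only [Finset.range_zero, Finset.sum_empty]
      have := hnonneg 0
      have : (0:ℝ) ≤ s 0 ^ (1 - q) / (q - 1) :=
        div_nonneg (Real.rpow_nonneg (hs0 0).le _) (by linarith)
      positivity
  | succ N' =>
      rw [Finset.sum_range_succ']
      have hterm : ∀ i, u (i + 1) / s (i + 1) ^ q ≤
          (s i ^ (1 - q) - s (i + 1) ^ (1 - q)) / (q - 1) := by
        intro i
        have hdiff : s (i + 1) - s i = u (i + 1) := by
          simp only [hs, Finset.sum_range_succ]; ring
        have h := key_ineq hq (hs0 i) (hsmono (Nat.le_succ i))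
        rwa [hdiff] at h
      have h1 : ∑ i ∈ Finset.range N', u (i + 1) / s (i + 1) ^ q ≤
          ∑ i ∈ Finset.range N', (s i ^ (1 - q) - s (i + 1) ^ (1 - q)) / (q - 1) :=
        Finset.sum_le_sum (fun i _ => hterm i)
      have h2 : ∑ i ∈ Finset.range N', (s i ^ (1 - q) - s (i + 1) ^ (1 - q)) / (q - 1)
          = (s 0 ^ (1 - q) - s N' ^ (1 - q)) / (q - 1) := by
        rw [← Finset.sum_div, Finset.sum_range_sub' (fun i => s i ^ (1 - q))]
      have h3 : (s 0 ^ (1 - q) - s N' ^ (1 - q)) / (q - 1) ≤ s 0 ^ (1 - q) / (q - 1) := by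
        apply div_le_div_of_nonneg_right ?_ (by linarith)
        · linarith [Real.rpow_nonneg (hs0 N').le (1 - q)]
      linarith


lemma tsum_ofReal_eq_top {f : ℕ → ℝ} (hf : ∀ n, 0 ≤ f n) (hns : ¬ Summable f) :
    ∑' n, ENNReal.ofReal (f n) = ⊤ := by
  by_contra h
  have h1 := ENNReal.summable_toReal h
  have h2 : (fun n => (ENNReal.ofReal (f n)).toReal) = f :=
    funext fun n => ENNReal.toReal_ofReal (hf n)
  rw [h2] at h1
  exact hns h1

lemma exists_mono_rearrange (d : ℕ → ℝ) (hd0 : ∀ n, 0 ≤ d n)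
    (hfin : ∀ ε : ℝ, 0 < ε → {n | ε ≤ d n}.Finite)
    (hP : {n | 0 < d n}.Infinite) :
    ∃ σ : ℕ → ℕ, Function.Injective σ ∧ (∀ n, 0 < d (σ n)) ∧
      (∀ n, d (σ (n + 1)) ≤ d (σ n)) ∧ (∀ k, 0 < d k → k ∈ Set.range σ) := by
  classical
  have hex : ∀ s : Finset ℕ, ∃ m, m ∉ s ∧ 0 < d m ∧ ∀ k, k ∉ s → d k ≤ d m := by
    intro s
    obtain ⟨k₀, hk₀, hk₀s⟩ := hP.exists_notMem_finset s
    simp only [Set.mem_setOf_eq] at hk₀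
    have hA : {n | d k₀ ≤ d n}.Finite := hfin (d k₀) hk₀
    set F : Finset ℕ := hA.toFinset.filter (fun k => k ∉ s) with hF
    have hk₀F : k₀ ∈ F := by
      simp only [hF, Finset.mem_filter, Set.Finite.mem_toFinset, Set.mem_setOf_eq]
      exact ⟨le_refl _, hk₀s⟩
    obtain ⟨m, hmF, hmax⟩ := F.exists_max_image d ⟨k₀, hk₀F⟩
    have hm' := hmF
    simp only [hF, Finset.mem_filter, Set.Finite.mem_toFinset, Set.mem_setOf_eq] at hm'
    refine ⟨m, hm'.2, lt_of_lt_of_le hk₀ (hmax k₀ hk₀F), ?_⟩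
    intro k hk
    by_cases hdk : d k₀ ≤ d k
    · apply hmax
      simp only [hF, Finset.mem_filter, Set.Finite.mem_toFinset, Set.mem_setOf_eq]
      exact ⟨hdk, hk⟩
    · exact le_trans (le_of_not_ge hdk) (hmax k₀ hk₀F)
  choose g hg1 hg2 hg3 using hex
  set S : ℕ → Finset ℕ := fun n => Nat.rec ∅ (fun _ sk => insert (g sk) sk) n with hS
  set σ : ℕ → ℕ := fun n => g (S n) with hσ
  have hSsucc : ∀ n, S (n + 1) = insert (σ n) (S n) := fun n => rfl
  have hsub : ∀ n, S n ⊆ S (n + 1) := by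
    intro n; rw [hSsucc]; exact Finset.subset_insert _ _
  have hsub' : ∀ m n, m ≤ n → S m ⊆ S n := by
    intro m n h
    induction h with
    | refl => exact Finset.Subset.refl _
    | step h ih => exact ih.trans (hsub _)
  have hmemS : ∀ j n, j < n → σ j ∈ S n := by
    intro j n hjn
    apply hsub' (j + 1) n hjn
    rw [hSsucc]; exact Finset.mem_insert_self _ _
  have hmem : ∀ n k, k ∈ S n → ∃ j, j < n ∧ σ j = k := by
    intro n
    induction n with
    | zero => intro k hk; simp [hS] at hk
    | succ n ih =>
        intro k hk
        rw [hSsucc, Finset.mem_insert] at hk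
        rcases hk with hk | hk
        · exact ⟨n, Nat.lt_succ_self n, hk.symm⟩
        · obtain ⟨j, hj, hjk⟩ := ih k hk
          exact ⟨j, hj.trans (Nat.lt_succ_self n), hjk⟩
  have hinj : Function.Injective σ := by
    intro i j hij
    by_contra hne
    rcases Ne.lt_or_gt hne with h | h
    · have h1 : σ i ∈ S j := hmemS i j h
      rw [hij] at h1
      exact hg1 (S j) h1
    · have h1 : σ j ∈ S i := hmemS j i h
      rw [← hij] at h1
      exact hg1 (S i) h1
  refine ⟨σ, hinj, fun n => hg2 (S n), ?_, ?_⟩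
  · intro n
    apply hg3 (S n)
    intro hmem'
    exact hg1 (S (n + 1)) (hsub n hmem')
  · intro k hk
    by_contra hkr
    have hkn : ∀ n, k ∉ S n := by
      intro n hkS
      obtain ⟨j, _, hj⟩ := hmem n k hkS
      exact hkr ⟨j, hj⟩
    have hle : ∀ n, d k ≤ d (σ n) := fun n => hg3 (S n) k (hkn n)
    have hsubr : Set.range σ ⊆ {n | d k ≤ d n} := by
      rintro _ ⟨n, rfl⟩; exact hle n
    exact (Set.infinite_range_of_injective hinj) ((hfin (d k) hk).subset hsubr)

lemma Nonoverlapping.comp_inj {a b : ℕ → ℝ} {σ : ℕ → ℕ} (hab : Nonoverlapping a b)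
    (hσ : Function.Injective σ) : Nonoverlapping (a ∘ σ) (b ∘ σ) :=
  ⟨fun n => hab.1 (σ n), fun m n hmn => hab.2 _ _ fun h => hmn (hσ h)⟩

lemma vLam_eq_top {lam : ℕ → ℝ} {f : ℝ → ℝ} {a b : ℕ → ℝ} (hab : Nonoverlapping a b)
    (h : ∑' n, ENNReal.ofReal (|f (b n) - f (a n)| / lam (n + 1)) = ⊤) :
    vLam lam f = ⊤ := by
  apply eq_top_iff.2
  rw [← h]
  calc ∑' n, ENNReal.ofReal (|f (b n) - f (a n)| / lam (n + 1))
      ≤ ⨆ (_ : Nonoverlapping a b),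
          ∑' n, ENNReal.ofReal (|f (b n) - f (a n)| / lam (n + 1)) :=
        le_iSup (fun _ => ∑' n, ENNReal.ofReal (|f (b n) - f (a n)| / lam (n + 1))) hab
    _ ≤ ⨆ (b' : ℕ → ℝ) (_ : Nonoverlapping a b'),
          ∑' n, ENNReal.ofReal (|f (b' n) - f (a n)| / lam (n + 1)) :=
        le_iSup (fun b' => ⨆ (_ : Nonoverlapping a b'),
          ∑' n, ENNReal.ofReal (|f (b' n) - f (a n)| / lam (n + 1))) b
    _ ≤ vLam lam f :=
        le_iSup (fun a' => ⨆ (b' : ℕ → ℝ) (_ : Nonoverlapping a' b'),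
          ∑' n, ENNReal.ofReal (|f (b' n) - f (a' n)| / lam (n + 1))) a

/-- If a bounded 1-periodic `f` is not of bounded `p`-variation, then there is
`Λ ∈ 𝒮_{p'}` with `f ∉ ΛBV`. -/
theorem stmt11 (p : ℝ) (hp : 1 < p) (f : ℝ → ℝ) (hper : Function.Periodic f 1)
    (hbdd : ∃ M : ℝ, ∀ x, |f x| ≤ M)
    (hnot : ∃ a b : ℕ → ℝ, Nonoverlapping a b ∧
      ¬ Summable (fun n => |f (b n) - f (a n)| ^ p)) :
    ∃ lam : ℕ → ℝ, IsLambdaSeq lam ∧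
      Summable (fun n : ℕ => (1 / lam (n + 1)) ^ (p / (p - 1))) ∧
      vLam lam f = ⊤ := by
  classical
  obtain ⟨M, hM⟩ := hbdd
  obtain ⟨a, b, hab, hns⟩ := hnot
  set d : ℕ → ℝ := fun n => |f (b n) - f (a n)| with hd
  have hd0 : ∀ n, 0 ≤ d n := fun n => abs_nonneg _
  have hp0 : (0:ℝ) < p := lt_trans one_pos hp
  have hp1 : (0:ℝ) < p - 1 := by linarith
  have hq1 : 1 < p / (p - 1) := by
    rw [lt_div_iff₀ hp1]; linarith
  have hM0 : 0 ≤ M := (abs_nonneg (f 0)).trans (hM 0)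
  set C : ℝ := 2 * M + 1 with hCdef
  have hC0 : (0:ℝ) < C := by linarith
  have hdC : ∀ n, d n ≤ C := by
    intro n
    have h1 : |f (b n) - f (a n)| ≤ |f (b n)| + |f (a n)| := by
      rw [sub_eq_add_neg]
      exact (abs_add_le _ _).trans (by rw [abs_neg])
    have := hM (b n); have := hM (a n)
    simp only [hd]; linarith
  -- an auxiliary fact used in case A
  have hnot1 : ¬ Summable (fun n : ℕ => 1 / (((n + 1 : ℕ) : ℝ))) := by
    intro h
    exact Real.not_summable_one_div_natCast
      ((summable_nat_add_iff (f := fun n : ℕ => 1 / ((n : ℕ) : ℝ)) 1).1 h)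
  by_cases hcase : ∃ ε : ℝ, 0 < ε ∧ {n | ε ≤ d n}.Infinite
  · -- Case A : d does not tend to zero
    obtain ⟨ε, hε, hinf⟩ := hcase
    set emb : ℕ ↪ {n | ε ≤ d n} := Set.Infinite.natEmbedding _ hinf with hemb
    set σ : ℕ → ℕ := fun n => (emb n : ℕ) with hσ
    have hσinj : Function.Injective σ := fun i j h =>
      emb.injective (Subtype.ext h)
    have hσmem : ∀ n, ε ≤ d (σ n) := fun n => (emb n).2
    refine ⟨fun n => (n : ℝ), ⟨?_, ?_, ?_, ?_⟩, ?_, ?_⟩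
    · intro n hn
      show (0:ℝ) < (n : ℝ)
      exact_mod_cast hn
    · intro m n _ hmn
      show (m : ℝ) ≤ (n : ℝ)
      exact_mod_cast hmn
    · exact tendsto_natCast_atTop_atTop
    · exact hnot1
    · -- summability of (1/(n+1))^(p/(p-1))
      have base : Summable (fun n : ℕ => 1 / ((n : ℕ) : ℝ) ^ (p / (p - 1))) :=
        Real.summable_one_div_nat_rpow.2 hq1
      have shifted : Summable (fun n : ℕ => 1 / (((n + 1 : ℕ)) : ℝ) ^ (p / (p - 1))) :=
        (summable_nat_add_iff (f := fun n : ℕ => 1 / ((n : ℕ) : ℝ) ^ (p / (p - 1))) 1).2 base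
      have heq : (fun n : ℕ => (1 / (((n + 1 : ℕ)) : ℝ)) ^ (p / (p - 1)))
          = fun n : ℕ => 1 / (((n + 1 : ℕ)) : ℝ) ^ (p / (p - 1)) := by
        funext n
        rw [Real.div_rpow (by norm_num) (Nat.cast_nonneg _), Real.one_rpow]
      rw [show (fun n : ℕ => (1 / ((fun m : ℕ => (m : ℝ)) (n + 1))) ^ (p / (p - 1)))
          = fun n : ℕ => (1 / (((n + 1 : ℕ)) : ℝ)) ^ (p / (p - 1)) from rfl, heq]
      exact shifted
    · -- vLam = ⊤
      apply vLam_eq_top (hab.comp_inj hσinj)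
      apply tsum_ofReal_eq_top
      · intro n
        exact div_nonneg (abs_nonneg _) (by positivity)
      · intro hsum
        have h2 : Summable (fun n : ℕ => ε / (((n + 1 : ℕ)) : ℝ)) := by
          refine Summable.of_nonneg_of_le (fun n => by positivity) (fun n => ?_) hsum
          have hc : (0:ℝ) < (((n + 1 : ℕ)) : ℝ) := by positivity
          exact div_le_div_of_nonneg_right (hσmem n) hc.le
        have h3 : Summable (fun n : ℕ => 1 / (((n + 1 : ℕ)) : ℝ)) := by
          have h4 := h2.mul_left ε⁻¹
          have h5 : (fun n : ℕ => ε⁻¹ * (ε / (((n + 1 : ℕ)) : ℝ)))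
              = fun n : ℕ => 1 / (((n + 1 : ℕ)) : ℝ) := by
            funext n
            rw [← mul_div_assoc, inv_mul_cancel₀ (ne_of_gt hε), one_div]
          rwa [h5] at h4
        exact hnot1 h3
  · -- Case B : all superlevel sets are finite
    push_neg at hcase
    have hfin : ∀ ε : ℝ, 0 < ε → {n | ε ≤ d n}.Finite := by
      intro ε hε
      exact hcase ε hε
    have hP : {n | 0 < d n}.Infinite := by
      intro hPf
      apply hns
      apply summable_of_ne_finset_zero (s := hPf.toFinset)
      intro n hn
      simp only [Set.Finite.mem_toFinset, Set.mem_setOf_eq, not_lt] at hn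
      have hdn : d n = 0 := le_antisymm hn (hd0 n)
      show d n ^ p = 0
      rw [hdn, Real.zero_rpow (ne_of_gt hp0)]
    obtain ⟨σ, hσinj, hσpos, hσanti, hσrange⟩ := exists_mono_rearrange d hd0 hfin hP
    set e : ℕ → ℝ := fun n => d (σ n) with he
    set u : ℕ → ℝ := fun n => e n ^ p with hu'
    have he0 : ∀ n, 0 < e n := hσpos
    have heC : ∀ n, e n ≤ C := fun n => hdC (σ n)
    have hu : ∀ n, 0 < u n := fun n => Real.rpow_pos_of_pos (he0 n) p
    have hnsu : ¬ Summable u := by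
      intro h
      apply hns
      refine (Function.Injective.summable_iff hσinj ?_).1 h
      intro k hk
      have hdk : d k = 0 := by
        by_contra hdk
        exact hk (hσrange k (lt_of_le_of_ne (hd0 k) (Ne.symm hdk)))
      show d k ^ p = 0
      rw [hdk, Real.zero_rpow (ne_of_gt hp0)]
    have hS0 : ∀ n, (0:ℝ) < ∑ i ∈ Finset.range (n + 1), u i := fun n =>
      Finset.sum_pos (fun i _ => hu i) ⟨0, Finset.mem_range.2 (Nat.succ_pos n)⟩
    have hSmono : ∀ m n, m ≤ n →
        (∑ i ∈ Finset.range (m + 1), u i) ≤ ∑ i ∈ Finset.range (n + 1), u i := by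
      intro m n h
      exact Finset.sum_le_sum_of_subset_of_nonneg
        (Finset.range_subset_range.2 (by omega)) (fun i _ _ => (hu i).le)
    have hep : ∀ n, (0:ℝ) < e n ^ (p - 1) := fun n => Real.rpow_pos_of_pos (he0 n) _
    have hanti : Antitone e := antitone_nat_of_succ_le hσanti
    set lam : ℕ → ℝ :=
      fun n => (∑ i ∈ Finset.range (n - 1 + 1), u i) / e (n - 1) ^ (p - 1) with hlam
    have hlamsucc : ∀ n : ℕ,
        lam (n + 1) = (∑ i ∈ Finset.range (n + 1), u i) / e n ^ (p - 1) := fun n => rfl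
    have hC1 : (0:ℝ) < C ^ (p - 1) := Real.rpow_pos_of_pos hC0 _
    have hupow : ∀ n, u n = e n ^ (p - 1) * e n := by
      intro n
      have h1 := Real.rpow_add (he0 n) (p - 1) 1
      rw [Real.rpow_one] at h1
      have h2 : p - 1 + 1 = p := by ring
      rw [h2] at h1
      exact h1
    -- the key divergent series
    have hdiv : ¬ Summable (fun n => u n / ∑ i ∈ Finset.range (n + 1), u i) :=
      AD_div u hu hnsu
    refine ⟨lam, ⟨?_, ?_, ?_, ?_⟩, ?_, ?_⟩
    · intro n _
      exact div_pos (hS0 _) (hep _)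
    · intro m n _ hmn
      refine div_le_div₀ (hS0 _).le (hSmono _ _ (by omega)) (hep _) ?_
      exact Real.rpow_le_rpow (he0 _).le (hanti (by omega : m - 1 ≤ n - 1)) (by linarith)
    · have hstop : Tendsto (fun n => ∑ i ∈ Finset.range (n + 1), u i) atTop atTop := by
        have h1 := (not_summable_iff_tendsto_nat_atTop_of_nonneg (fun n => (hu n).le)).1 hnsu
        exact h1.comp (tendsto_add_atTop_nat 1)
      have hφ : Tendsto (fun n : ℕ =>
          (∑ i ∈ Finset.range (n - 1 + 1), u i) / C ^ (p - 1)) atTop atTop :=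
        (hstop.comp (tendsto_sub_atTop_nat 1)).atTop_div_const hC1
      apply tendsto_atTop_mono _ hφ
      intro n
      exact div_le_div_of_nonneg_left (hS0 _).le (hep _)
        (Real.rpow_le_rpow (he0 _).le (heC _) (by linarith))
    · -- ¬ Summable 1 / lam (n+1)
      intro h
      have h' : Summable (fun n => e n ^ (p - 1) / ∑ i ∈ Finset.range (n + 1), u i) := by
        have heq : (fun n => 1 / lam (n + 1))
            = fun n => e n ^ (p - 1) / ∑ i ∈ Finset.range (n + 1), u i := by
          funext n
          rw [hlamsucc n, one_div_div]
        rwa [heq] at h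
      apply hdiv
      refine Summable.of_nonneg_of_le
        (fun n => div_nonneg (hu n).le (hS0 n).le) (fun n => ?_) (h'.mul_left C)
      calc u n / ∑ i ∈ Finset.range (n + 1), u i
          = (e n ^ (p - 1) * e n) / ∑ i ∈ Finset.range (n + 1), u i := by rw [← hupow n]
        _ ≤ (e n ^ (p - 1) * C) / ∑ i ∈ Finset.range (n + 1), u i := by
            apply div_le_div_of_nonneg_right ?_ (hS0 n).le
            exact mul_le_mul_of_nonneg_left (heC n) (hep n).le
        _ = C * (e n ^ (p - 1) / ∑ i ∈ Finset.range (n + 1), u i) := by ring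
    · -- Summability of (1/lam (n+1))^(p/(p-1))
      have heq : (fun n : ℕ => (1 / lam (n + 1)) ^ (p / (p - 1)))
          = fun n => u n / (∑ i ∈ Finset.range (n + 1), u i) ^ (p / (p - 1)) := by
        funext n
        rw [hlamsucc n, one_div_div,
          Real.div_rpow (Real.rpow_nonneg (he0 n).le _) (hS0 n).le,
          ← Real.rpow_mul (he0 n).le]
        congr 2
        field_simp
      rw [heq]
      exact AD_conv _ hq1 u hu
    · -- vLam = ⊤
      apply vLam_eq_top (hab.comp_inj hσinj)
      have heq : ∀ n : ℕ, |f ((b ∘ σ) n) - f ((a ∘ σ) n)| / lam (n + 1)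
          = u n / ∑ i ∈ Finset.range (n + 1), u i := by
        intro n
        have h1 : |f ((b ∘ σ) n) - f ((a ∘ σ) n)| = e n := rfl
        rw [h1, hlamsucc n, div_div_eq_mul_div, mul_comm, ← hupow n]
      have heq2 : (fun n : ℕ => ENNReal.ofReal (|f ((b ∘ σ) n) - f ((a ∘ σ) n)| / lam (n + 1)))
          = fun n => ENNReal.ofReal (u n / ∑ i ∈ Finset.range (n + 1), u i) := by
        funext n; rw [heq n]
      rw [tsum_congr (fun n => congrFun heq2 n)]
      exact tsum_ofReal_eq_top (fun n => div_nonneg (hu n).le (hS0 n).le) hdiv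
end
end
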